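/- arXiv:2512.11618 — 7 statements merged into one kernel-verified Lean document; each statement's English description precedes it below -/
import Mathlib

section
/- Let A = a_1, ..., a_n be a sequence of integers with sum equal to -1. Then all n cyclic rotations of A are pairwise distinct sequences. -/
private lemma aux_rot (n : ℕ) (hn : 1 ≤ n) (a : ℕ → ℤ)
    (hsum : ∑ i ∈ Finset.range n, a i = -1)
    (r s : ℕ) (hr : r < n) (hs : s < n) (hrs : r ≤ s)
    (h : ∀ i < n, a ((i + r) % n) = a ((i + s) % n)) :
    r = s := by
  by_contra hne
  set d := s - r with hd
  have hd1 : 1 ≤ d := by omega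
  have hdn : d < n := by omega
  have h' : ∀ i : ℕ, a ((i + r) % n) = a ((i + s) % n) := by
    intro i
    have := h (i % n) (Nat.mod_lt _ (by omega))
    rwa [Nat.mod_add_mod, Nat.mod_add_mod] at this
  -- period d
  have hp : ∀ i : ℕ, a ((i + d) % n) = a (i % n) := by
    intro i
    have := h' (i + (n - r))
    have e1 : i + (n - r) + r = i + n := by omega
    have e2 : i + (n - r) + s = i + d + n := by omega
    rw [e1, e2, Nat.add_mod_right, Nat.add_mod_right] at this
    exact this.symm
  set g := Nat.gcd d n with hg
  -- find k with d*k ≡ g mod n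
  obtain ⟨k, hk⟩ : ∃ k : ℕ, (d * k) % n = g % n := by
    obtain ⟨x, y, hxy⟩ : ∃ x y : ℤ, (g : ℤ) = d * x + n * y :=
      ⟨Nat.gcdA d n, Nat.gcdB d n, Nat.gcd_eq_gcd_ab d n⟩
    have hn0 : (0 : ℤ) < (n : ℤ) := by exact_mod_cast hn
    have hx0 : 0 ≤ x % (n : ℤ) := Int.emod_nonneg x (by omega)
    refine ⟨(x % (n : ℤ)).toNat, ?_⟩
    have hz : ((d * (x % (n : ℤ)).toNat : ℕ) : ℤ) % n = ((g : ℕ) : ℤ) % n := by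
      push_cast [Int.toNat_of_nonneg hx0]
      have h1 : ((d : ℤ) * (x % n)) % n = ((d : ℤ) * x) % n := by
        conv_lhs => rw [Int.mul_emod, Int.emod_emod_of_dvd x dvd_rfl, ← Int.mul_emod]
      rw [h1, hxy]
      have : (d : ℤ) * x = ((d : ℤ) * x + n * y) - n * y := by ring
      rw [this]
      simp [Int.sub_emod, Int.mul_emod_right]
    have := hz
    have goalnat : (d * (x % (n : ℤ)).toNat) % n = g % n := by
      have : (((d * (x % (n : ℤ)).toNat) % n : ℕ) : ℤ) = ((g % n : ℕ) : ℤ) := by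
        push_cast
        exact hz
      exact_mod_cast this
    exact goalnat
  -- period d*j
  have hpd : ∀ j i : ℕ, a ((i + d * j) % n) = a (i % n) := by
    intro j
    induction j with
    | zero => simp
    | succ j ih =>
      intro i
      have e : i + d * (j + 1) = (i + d * j) + d := by ring
      rw [e, hp (i + d * j), ih]
  -- period g
  have hpg : ∀ i : ℕ, a ((i + g) % n) = a (i % n) := by
    intro i
    have e : (i + g) % n = (i + d * k) % n := by
      conv_lhs => rw [Nat.add_mod, hk.symm, ← Nat.add_mod]
    rw [e, hpd k i]
  -- period g*j
  have hpgj : ∀ j i : ℕ, a ((i + g * j) % n) = a (i % n) := by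
    intro j
    induction j with
    | zero => simp
    | succ j ih =>
      intro i
      have e : i + g * (j + 1) = (i + g * j) + g := by ring
      rw [e, hpg (i + g * j), ih]
  obtain ⟨m, hm⟩ : g ∣ n := Nat.gcd_dvd_right d n
  have hsum' : ∑ i ∈ Finset.range n, a (i % n) = -1 := by
    rw [← hsum]
    refine Finset.sum_congr rfl fun i hi => ?_
    rw [Nat.mod_eq_of_lt (Finset.mem_range.mp hi)]
  have key : ∀ j : ℕ, ∑ i ∈ Finset.range (g * j), a (i % n)
      = (j : ℤ) * ∑ i ∈ Finset.range g, a (i % n) := by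
    intro j
    induction j with
    | zero => simp
    | succ j ih =>
      rw [Nat.mul_succ, Finset.sum_range_add, ih]
      have e : ∑ i ∈ Finset.range g, a ((g * j + i) % n)
          = ∑ i ∈ Finset.range g, a (i % n) := by
        refine Finset.sum_congr rfl fun i _ => ?_
        rw [Nat.add_comm (g * j) i, hpgj j i]
      rw [e]
      push_cast
      ring
  have keym := key m
  rw [← hm] at keym
  rw [hsum'] at keym
  have hmdvd : (m : ℤ) ∣ -1 := Dvd.intro _ keym.symm
  have hm1 : m = 1 := by
    have : (m : ℤ) ∣ 1 := (dvd_neg).mp hmdvd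
    have : m ∣ 1 := by exact_mod_cast this
    exact Nat.dvd_one.mp this
  have hgd : g ∣ d := Nat.gcd_dvd_left d n
  have hgled : g ≤ d := Nat.le_of_dvd (by omega) hgd
  have hng : n = g := by rw [hm, hm1, mul_one]
  omega

/-- Let `A = a_1, ..., a_n` be a sequence of integers with sum `-1`.
Then all `n` cyclic rotations of `A` are pairwise distinct sequences.
We index the sequence by `0, ..., n-1`; the rotation by `r` is `i ↦ a ((i + r) % n)`. -/
theorem cyclic_rotations_distinct (n : ℕ) (hn : 1 ≤ n) (a : ℕ → ℤ)
    (hsum : ∑ i ∈ Finset.range n, a i = -1)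
    (r s : ℕ) (hr : r < n) (hs : s < n)
    (h : ∀ i < n, a ((i + r) % n) = a ((i + s) % n)) :
    r = s := by
  rcases le_total r s with hrs | hrs
  · exact aux_rot n hn a hsum r s hr hs hrs h
  · exact (aux_rot n hn a hsum s r hs hr hrs (fun i hi => (h i hi).symm)).symm
end

section
/- Let A = a_1, ..., a_n be a sequence of integers with sum equal to -1. Then there exists exactly one cyclic rotation A' = a_1', ..., a_n' of A such that all proper prefix sums are nonnegative, i.e., for every j with 1 ≤ j ≤ n-1 it holds that a_1' + ... + a_j' ≥ 0. -/
/-- Prefix sums of the periodized sequence. -/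
def Spre (n : ℕ) (a : ℕ → ℤ) (k : ℕ) : ℤ := ∑ i ∈ Finset.range k, a (i % n)

lemma Spre_succ (n : ℕ) (a : ℕ → ℤ) (k : ℕ) :
    Spre n a (k + 1) = Spre n a k + a (k % n) := Finset.sum_range_succ _ _

lemma prefix_eq (n : ℕ) (a : ℕ → ℤ) (r j : ℕ) :
    ∑ i ∈ Finset.range j, a ((i + r) % n) = Spre n a (r + j) - Spre n a r := by
  induction j with
  | zero => simp
  | succ j ih =>
    rw [Finset.sum_range_succ, ih, show r + (j + 1) = (r + j) + 1 from rfl, Spre_succ,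
      show j + r = r + j from Nat.add_comm j r]
    ring

lemma Spre_period (n : ℕ) (_hn : 1 ≤ n) (a : ℕ → ℤ)
    (hsum : ∑ i ∈ Finset.range n, a i = -1) (k : ℕ) :
    Spre n a (k + n) = Spre n a k - 1 := by
  induction k with
  | zero =>
    have : Spre n a n = -1 := by
      rw [Spre, ← hsum]
      exact Finset.sum_congr rfl fun i hi => by
        rw [Nat.mod_eq_of_lt (Finset.mem_range.mp hi)]
    simpa [Spre] using this
  | succ k ih =>
    rw [show k + 1 + n = (k + n) + 1 from by ring, Spre_succ, ih, Spre_succ,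
      Nat.add_mod_right]
    ring

/-- **cycle lemma.** Let `A = a_1, ..., a_n` be a sequence of integers with
sum `-1`. Then there exists exactly one cyclic rotation `A'` of `A` such that all proper
prefix sums of `A'` are nonnegative.  We index by `0, ..., n-1`; the rotation by `r` is
`i ↦ a ((i + r) % n)`, and its prefix sum of length `j` is `∑ i < j, a ((i + r) % n)`. -/
theorem cycle_lemma (n : ℕ) (hn : 1 ≤ n) (a : ℕ → ℤ)
    (hsum : ∑ i ∈ Finset.range n, a i = -1) :
    ∃! r : ℕ, r < n ∧
      ∀ j : ℕ, 1 ≤ j → j ≤ n - 1 → 0 ≤ ∑ i ∈ Finset.range j, a ((i + r) % n) := by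
  set S : ℕ → ℤ := Spre n a with hSdef
  -- there is a k < n minimizing S on [0, n)
  have hex : ∃ k : ℕ, k < n ∧ ∀ l, l < n → S k ≤ S l := by
    obtain ⟨k, hk, hkmin⟩ := Finset.exists_min_image (Finset.range n) S
      ⟨0, Finset.mem_range.mpr hn⟩
    exact ⟨k, Finset.mem_range.mp hk, fun l hl => hkmin l (Finset.mem_range.mpr hl)⟩
  classical
  set r := Nat.find hex with hrdef
  obtain ⟨hrn, hrmin⟩ := Nat.find_spec hex
  rw [← hrdef] at hrn hrmin
  -- strict minimality before r
  have hstrict : ∀ m, m < r → S r < S m := by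
    intro m hm
    have hmn : m < n := lt_trans hm hrn
    have := Nat.find_min hex hm
    push_neg at this
    obtain ⟨l, hl, hlm⟩ := this hmn
    exact lt_of_le_of_lt (hrmin l hl) hlm
  have hgood : ∀ j : ℕ, 1 ≤ j → j ≤ n - 1 →
      0 ≤ ∑ i ∈ Finset.range j, a ((i + r) % n) := by
    intro j hj1 hjn
    rw [prefix_eq]
    rw [sub_nonneg]
    by_cases hcase : r + j < n
    · exact hrmin _ hcase
    · push_neg at hcase
      have hj' : r + j - n < r := by omega
      have heq : S (r + j) = S (r + j - n) - 1 := by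
        have := Spre_period n hn a hsum (r + j - n)
        rw [show r + j - n + n = r + j from by omega] at this
        exact this
      rw [show Spre n a = S from hSdef.symm, heq]
      have := hstrict _ hj'
      omega
  refine ⟨r, ⟨hrn, hgood⟩, ?_⟩
  rintro r' ⟨hr'n, hr'good⟩
  by_contra hne
  rcases lt_or_gt_of_ne hne with h | h
  · -- r' < r : take j = r - r'
    have hj1 : 1 ≤ r - r' := by omega
    have hjn : r - r' ≤ n - 1 := by omega
    have := hr'good (r - r') hj1 hjn
    rw [prefix_eq, show r' + (r - r') = r from by omega] at this
    have hstr := hstrict r' h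
    rw [← hSdef] at this
    omega
  · -- r < r' : take j = r + n - r'
    have hj1 : 1 ≤ r + n - r' := by omega
    have hjn : r + n - r' ≤ n - 1 := by omega
    have := hr'good (r + n - r') hj1 hjn
    rw [prefix_eq, show r' + (r + n - r') = r + n from by omega] at this
    have hper := Spre_period n hn a hsum r
    have hmin := hrmin r' hr'n
    rw [← hSdef] at this hper
    omega
end

section
/- Let n ≥ 1 and let (n_c)_{c ∈ Σ} be a family of nonnegative integers indexed by a finite alphabet Σ with Σ_c n_c = n - 1. Then the number of tries (cardinal trees) with n nodes in which each symbol c labels exactly n_c edges equals (1/n) · ∏_{c ∈ Σ} C(n, n_c), where C(n, k) denotes the binomial coefficient. -/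
/-- An ordered edge-labeled rooted tree: each node carries a list of
(label, subtree) pairs, listed in sibling order. -/
inductive LTree (A : Type) : Type where
  | node : List (A × LTree A) → LTree A

/-- A labeled ordered tree is a trie if at every node the labels of the outgoing
edges are strictly increasing in the alphabet order (hence pairwise distinct and
siblings are sorted by their incoming label). -/
inductive LTree.IsTrie {A : Type} [LT A] : LTree A → Prop where
  | node (cs : List (A × LTree A))
      (hsort : (cs.map Prod.fst).Chain' (· < ·))
      (hsub : ∀ p ∈ cs, IsTrie p.2) :
      IsTrie (.node cs)

/-- Number of nodes of a labeled ordered tree. -/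
def LTree.size {A : Type} : LTree A → ℕ
  | .node cs => 1 + (cs.attach.map (fun p => p.1.2.size)).sum
decreasing_by
  have h := List.sizeOf_lt_of_mem p.2
  obtain ⟨⟨a, t⟩, hp⟩ := p
  simp at h ⊢
  omega

/-- Number of edges carrying the label `c`. -/
def LTree.labelCount {A : Type} [DecidableEq A] (c : A) : LTree A → ℕ
  | .node cs =>
      (cs.attach.map (fun p => (if p.1.1 = c then 1 else 0) + p.1.2.labelCount c)).sum
decreasing_by
  have h := List.sizeOf_lt_of_mem p.2
  obtain ⟨⟨a, t⟩, hp⟩ := p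
  simp at h ⊢
  omega

namespace LTree
variable {A : Type} [LinearOrder A]

def codeT : LTree A → List (Finset A)
  | .node cs => (cs.map Prod.fst).toFinset :: (cs.attach.map fun p => p.1.2.codeT).flatten
decreasing_by
  have h := List.sizeOf_lt_of_mem p.2
  obtain ⟨⟨a, t⟩, hp⟩ := p
  simp at h ⊢
  omega

def codeF (ts : List (LTree A)) : List (Finset A) := (ts.map codeT).flatten

theorem codeT_node (cs : List (A × LTree A)) :
    codeT (node cs) = (cs.map Prod.fst).toFinset :: codeF (cs.map Prod.snd) := by
  rw [codeT, codeF]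
  congr 1
  rw [List.map_map]
  congr 1
  exact List.attach_map_val (l := cs) (f := fun p => p.2.codeT)

def decodeF : ℕ → List (Finset A) → List (LTree A)
  | 0, _ => []
  | _+1, [] => []
  | k+1, s :: rest =>
      let ts := decodeF (s.card + k) rest
      .node ((s.sort (· ≤ ·)).zip ts) :: ts.drop s.card
termination_by _ l => l.length

def sumCard (l : List (Finset A)) : ℕ := (l.map Finset.card).sum

def cnt (c : A) (l : List (Finset A)) : ℕ := (l.map fun s => if c ∈ s then 1 else 0).sum

def Good (k : ℕ) (l : List (Finset A)) : Prop :=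
  (∀ j < l.length, j < k + sumCard (l.take j)) ∧ k + sumCard l = l.length

@[simp] theorem sumCard_nil : sumCard ([] : List (Finset A)) = 0 := rfl
@[simp] theorem sumCard_cons (s : Finset A) (l : List (Finset A)) :
    sumCard (s :: l) = s.card + sumCard l := rfl
@[simp] theorem sumCard_append (l l' : List (Finset A)) :
    sumCard (l ++ l') = sumCard l + sumCard l' := by simp [sumCard]

@[simp] theorem cnt_nil (c : A) : cnt c ([] : List (Finset A)) = 0 := rfl
@[simp] theorem cnt_cons (c : A) (s : Finset A) (l : List (Finset A)) :
    cnt c (s :: l) = (if c ∈ s then 1 else 0) + cnt c l := rfl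
@[simp] theorem cnt_append (c : A) (l l' : List (Finset A)) :
    cnt c (l ++ l') = cnt c l + cnt c l' := by simp [cnt]

@[simp] theorem codeF_nil : codeF ([] : List (LTree A)) = [] := rfl
@[simp] theorem codeF_cons (t : LTree A) (ts : List (LTree A)) :
    codeF (t :: ts) = codeT t ++ codeF ts := by simp [codeF]
@[simp] theorem codeF_append (ts ts' : List (LTree A)) :
    codeF (ts ++ ts') = codeF ts ++ codeF ts' := by simp [codeF]

theorem Good.ne_zero {k : ℕ} {l : List (Finset A)} (h : Good k l) (hl : l ≠ []) : k ≠ 0 := by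
  rintro rfl
  have h0 := h.1 0 (by cases l with | nil => exact absurd rfl hl | cons a l => simp)
  simp [sumCard] at h0

theorem Good.eq_nil {l : List (Finset A)} (h : Good 0 l) : l = [] := by
  by_contra hl
  exact Good.ne_zero h hl rfl

theorem Good.append {k k' : ℕ} {l l' : List (Finset A)} (h : Good k l) (h' : Good k' l') :
    Good (k + k') (l ++ l') := by
  obtain ⟨h1, h2⟩ := h
  obtain ⟨h1', h2'⟩ := h'
  constructor
  · intro j hj
    rcases lt_trichotomy j l.length with hlt | heq | hgt
    · rw [List.take_append_of_le_length hlt.le]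
      have := h1 j hlt
      omega
    · subst heq
      rw [List.take_append_of_le_length le_rfl, List.take_length]
      have hl' : l' ≠ [] := by
        intro hn; subst hn; simp at hj
      have := Good.ne_zero ⟨h1', h2'⟩ hl'
      omega
    · have hj2 : j - l.length < l'.length := by simp at hj; omega
      have := h1' (j - l.length) hj2
      have ht : (l ++ l').take j = l ++ l'.take (j - l.length) := by
        rw [List.take_append, List.take_of_length_le (by omega)]
      rw [ht]
      simp only [sumCard_append]
      omega
  · simp only [sumCard_append, List.length_append]
    omega

theorem Good.cons {m : ℕ} {s : Finset A} {l : List (Finset A)} (h : Good m l)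
    (hs : s.card = m) : Good 1 (s :: l) := by
  obtain ⟨h1, h2⟩ := h
  constructor
  · intro j hj
    cases j with
    | zero => simp
    | succ j' =>
      simp only [List.length_cons] at hj
      have := h1 j' (by omega)
      simp only [List.take_succ_cons, sumCard_cons]
      omega
  · simp only [sumCard_cons, List.length_cons]
    omega

set_option linter.unusedSectionVars false

theorem size_node (cs : List (A × LTree A)) :
    size (node cs) = 1 + (cs.map fun p => p.2.size).sum := by
  rw [size]
  congr 1
  congr 1
  exact List.attach_map_val (l := cs) (f := fun p => p.2.size)

theorem labelCount_node (c : A) (cs : List (A × LTree A)) :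
    labelCount c (node cs) =
      (cs.map fun p => (if p.1 = c then 1 else 0) + labelCount c p.2).sum := by
  rw [labelCount]
  congr 1
  exact List.attach_map_val (l := cs) (f := fun p => (if p.1 = c then 1 else 0) + labelCount c p.2)

theorem nodup_labels {cs : List (A × LTree A)} (h : (cs.map Prod.fst).Chain' (· < ·)) :
    (cs.map Prod.fst).Nodup :=
  (List.isChain_iff_pairwise.mp h).imp ne_of_lt

theorem good_codeF : ∀ (N : ℕ) (ts : List (LTree A)), (codeF ts).length ≤ N →
    (∀ t ∈ ts, t.IsTrie) → Good ts.length (codeF ts) := by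
  intro N
  induction N with
  | zero =>
    intro ts hlen _
    cases ts with
    | nil => exact ⟨by simp, by simp⟩
    | cons t ts' =>
      obtain ⟨cs⟩ := t
      rw [codeF_cons, codeT_node] at hlen
      simp at hlen
  | succ N ihN =>
    intro ts hlen htrie
    cases ts with
    | nil => exact ⟨by simp, by simp⟩
    | cons t ts' =>
      obtain ⟨cs⟩ := t
      have hT := htrie _ (List.mem_cons_self)
      rcases hT with ⟨_, hsort, hsub⟩
      have hlen' : (codeF (node cs :: ts')).length = 1 + (codeF (cs.map Prod.snd)).length
          + (codeF ts').length := by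
        rw [codeF_cons, codeT_node]; simp; omega
      have g1 : Good (cs.map Prod.snd).length (codeF (cs.map Prod.snd)) := by
        apply ihN _ (by omega)
        intro u hu
        obtain ⟨p, hp, rfl⟩ := List.mem_map.mp hu
        exact hsub p hp
      have g2 : Good ts'.length (codeF ts') := by
        apply ihN _ (by omega)
        intro u hu; exact htrie u (List.mem_cons_of_mem _ hu)
      have hcard : (cs.map Prod.fst).toFinset.card = (cs.map Prod.snd).length := by
        rw [List.toFinset_card_of_nodup (nodup_labels hsort)]; simp
      have gt : Good 1 (codeT (node cs)) := by
        rw [codeT_node]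
        exact Good.cons g1 hcard
      have := gt.append g2
      rw [← codeF_cons] at this
      simpa [Nat.add_comm] using this

theorem good_codeT {t : LTree A} (h : t.IsTrie) : Good 1 (codeT t) := by
  have := good_codeF (codeF [t]).length [t] le_rfl (by simpa using h)
  simpa using this

theorem sum_map_add {α : Type} (l : List α) (f g : α → ℕ) :
    (l.map fun a => f a + g a).sum = (l.map f).sum + (l.map g).sum := by
  induction l with
  | nil => simp
  | cons a l ih => simp [ih]; omega

theorem sum_ind_of_not_mem {l : List A} {c : A} (h : c ∉ l) :
    (l.map fun a => if a = c then 1 else 0).sum = 0 := by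
  induction l with
  | nil => simp
  | cons a l ih =>
    simp only [List.mem_cons, not_or] at h
    simp [ih h.2, Ne.symm, h.1]

theorem sum_ind_nodup {l : List A} (h : l.Nodup) (c : A) :
    (l.map fun a => if a = c then (1:ℕ) else 0).sum = if c ∈ l then 1 else 0 := by
  induction l with
  | nil => simp
  | cons a l ih =>
    rcases List.nodup_cons.mp h with ⟨ha, hl⟩
    by_cases hac : a = c
    · subst hac
      simp [sum_ind_of_not_mem ha]
    · simp only [List.map_cons, List.sum_cons, if_neg hac, ih hl, List.mem_cons]
      simp [Ne.symm hac]

theorem length_codeF : ∀ (N : ℕ) (ts : List (LTree A)), (codeF ts).length ≤ N →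
    (ts.map size).sum = (codeF ts).length := by
  intro N
  induction N with
  | zero =>
    intro ts hlen
    cases ts with
    | nil => simp
    | cons t ts' =>
      obtain ⟨cs⟩ := t
      rw [codeF_cons, codeT_node] at hlen
      simp at hlen
  | succ N ihN =>
    intro ts hlen
    cases ts with
    | nil => simp
    | cons t ts' =>
      obtain ⟨cs⟩ := t
      have hlen' : (codeF (node cs :: ts')).length = 1 + (codeF (cs.map Prod.snd)).length
          + (codeF ts').length := by
        rw [codeF_cons, codeT_node]; simp; omega
      have h1 := ihN (cs.map Prod.snd) (by omega)
      have h2 := ihN ts' (by omega)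
      simp only [List.map_cons, List.sum_cons, size_node, hlen']
      rw [← h1, ← h2]
      simp [List.map_map]
      rfl

theorem length_codeT (t : LTree A) : t.size = (codeT t).length := by
  have := length_codeF (codeF [t]).length [t] le_rfl
  simpa using this

theorem cnt_codeF (c : A) : ∀ (N : ℕ) (ts : List (LTree A)), (codeF ts).length ≤ N →
    (∀ t ∈ ts, t.IsTrie) → (ts.map (labelCount c)).sum = cnt c (codeF ts) := by
  intro N
  induction N with
  | zero =>
    intro ts hlen _
    cases ts with
    | nil => simp
    | cons t ts' =>
      obtain ⟨cs⟩ := t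
      rw [codeF_cons, codeT_node] at hlen
      simp at hlen
  | succ N ihN =>
    intro ts hlen htrie
    cases ts with
    | nil => simp
    | cons t ts' =>
      obtain ⟨cs⟩ := t
      have hT := htrie _ (List.mem_cons_self)
      rcases hT with ⟨_, hsort, hsub⟩
      have hlen' : (codeF (node cs :: ts')).length = 1 + (codeF (cs.map Prod.snd)).length
          + (codeF ts').length := by
        rw [codeF_cons, codeT_node]; simp; omega
      have h1 : ((cs.map Prod.snd).map (labelCount c)).sum = cnt c (codeF (cs.map Prod.snd)) := by
        apply ihN _ (by omega)
        intro u hu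
        obtain ⟨p, hp, rfl⟩ := List.mem_map.mp hu
        exact hsub p hp
      have h2 := ihN ts' (by omega) (fun u hu => htrie u (List.mem_cons_of_mem _ hu))
      simp only [List.map_cons, List.sum_cons, labelCount_node, codeF_cons, codeT_node,
        cnt_append, cnt_cons]
      rw [sum_map_add, ← h2]
      have hind : (cs.map fun p => if p.1 = c then 1 else 0).sum
          = if c ∈ (cs.map Prod.fst).toFinset then 1 else 0 := by
        have h' := sum_ind_nodup (nodup_labels hsort) c
        rw [List.map_map, Function.comp_def] at h'
        simp only [List.mem_toFinset]
        exact h'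
      rw [hind, ← h1, List.map_map]
      have : (cs.map (labelCount c ∘ Prod.snd)).sum = (cs.map fun p => labelCount c p.2).sum := rfl
      omega

theorem cnt_codeT (c : A) {t : LTree A} (h : t.IsTrie) : t.labelCount c = cnt c (codeT t) := by
  have := cnt_codeF c (codeF [t]).length [t] le_rfl (by simpa using h)
  simpa using this

theorem decodeF_succ_cons (k : ℕ) (s : Finset A) (rest : List (Finset A)) :
    decodeF (k+1) (s :: rest) =
      (node ((s.sort (· ≤ ·)).zip (decodeF (s.card + k) rest)) : LTree A)
        :: (decodeF (s.card + k) rest).drop s.card := by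
  rw [decodeF]

theorem sorted_le_labels {cs : List (A × LTree A)} (h : (cs.map Prod.fst).Chain' (· < ·)) :
    (cs.map Prod.fst).Pairwise (· ≤ ·) :=
  (List.isChain_iff_pairwise.mp h).imp le_of_lt

theorem zip_append_right {α β : Type} : ∀ (l1 : List α) (l2 l3 : List β),
    l1.length = l2.length → l1.zip (l2 ++ l3) = l1.zip l2 := by
  intro l1 l2 l3 h
  have := List.zip_append (r₁ := ([] : List α)) (r₂ := l3) h
  simpa using this

theorem decodeF_codeF : ∀ (N : ℕ) (ts : List (LTree A)) (k : ℕ) (r : List (Finset A)),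
    (codeF ts).length ≤ N → (∀ t ∈ ts, t.IsTrie) →
    decodeF (ts.length + k) (codeF ts ++ r) = ts ++ decodeF k r := by
  intro N
  induction N with
  | zero =>
    intro ts k r hlen _
    cases ts with
    | nil => simp
    | cons t ts' =>
      obtain ⟨cs⟩ := t
      rw [codeF_cons, codeT_node] at hlen
      simp at hlen
  | succ N ihN =>
    intro ts k r hlen htrie
    cases ts with
    | nil => simp
    | cons t ts' =>
      obtain ⟨cs⟩ := t
      have hT := htrie _ (List.mem_cons_self)
      rcases hT with ⟨_, hsort, hsub⟩
      have hlen' : (codeF (node cs :: ts')).length = 1 + (codeF (cs.map Prod.snd)).length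
          + (codeF ts').length := by
        rw [codeF_cons, codeT_node]; simp; omega
      set S := (cs.map Prod.fst).toFinset with hS
      have hcard : S.card = cs.length := by
        rw [hS, List.toFinset_card_of_nodup (nodup_labels hsort)]; simp
      have hrw : codeF (node cs :: ts') ++ r
          = S :: (codeF (cs.map Prod.snd) ++ (codeF ts' ++ r)) := by
        rw [codeF_cons, codeT_node]; simp; rfl
      have hlen2 : (node cs :: ts').length + k = (ts'.length + k) + 1 := by simp; omega
      rw [hrw, hlen2, decodeF_succ_cons]
      have hch : ∀ u ∈ cs.map Prod.snd, IsTrie u := by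
        intro u hu
        obtain ⟨p, hp, rfl⟩ := List.mem_map.mp hu
        exact hsub p hp
      have hin : decodeF (S.card + (ts'.length + k)) (codeF (cs.map Prod.snd) ++ (codeF ts' ++ r))
          = cs.map Prod.snd ++ (ts' ++ decodeF k r) := by
        have : S.card + (ts'.length + k) = (cs.map Prod.snd).length + (ts'.length + k) := by
          simp [hcard]
        rw [this, ihN _ _ _ (by omega) hch, ihN _ _ _ (by omega)
          (fun u hu => htrie u (List.mem_cons_of_mem _ hu))]
      rw [hin]
      have hsort_eq : S.sort (· ≤ ·) = cs.map Prod.fst :=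
        (List.toFinset_sort (· ≤ ·) (nodup_labels hsort)).mpr (sorted_le_labels hsort)
      have hzip : (S.sort (· ≤ ·)).zip (cs.map Prod.snd ++ (ts' ++ decodeF k r))
          = cs := by
        rw [hsort_eq, zip_append_right _ _ _ (by simp), List.zip_map']
        simp
      have hdrop : (cs.map Prod.snd ++ (ts' ++ decodeF k r)).drop S.card = ts' ++ decodeF k r :=
        List.drop_left' (by simp [hcard])
      rw [hzip, hdrop]
      simp

theorem decodeF_codeT {t : LTree A} (h : t.IsTrie) : decodeF 1 (codeT t) = [t] := by
  have := decodeF_codeF (codeF [t]).length [t] 0 [] le_rfl (by simpa using h)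
  simpa [decodeF] using this

theorem exists_of_good : ∀ (N : ℕ) (l : List (Finset A)) (k : ℕ), l.length ≤ N → Good k l →
    ∃ ts : List (LTree A), ts.length = k ∧ (∀ t ∈ ts, t.IsTrie) ∧ codeF ts = l := by
  intro N
  induction N with
  | zero =>
    intro l k hlen hg
    have : l = [] := List.length_eq_zero_iff.mp (by omega)
    subst this
    have : k = 0 := by have := hg.2; simpa using this
    subst this
    exact ⟨[], rfl, by simp, rfl⟩
  | succ N ihN =>
    intro l k hlen hg
    cases k with
    | zero =>
      have := hg.eq_nil
      subst this
      exact ⟨[], rfl, by simp, rfl⟩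
    | succ k =>
      cases l with
      | nil =>
        have := hg.2
        simp [sumCard] at this
      | cons s rest =>
        have hg' : Good (s.card + k) rest := by
          constructor
          · intro j hj
            have := hg.1 (j+1) (by simp; omega)
            simp [sumCard] at this ⊢
            omega
          · have := hg.2
            simp [sumCard] at this ⊢
            omega
        obtain ⟨ts', hlen', htr', hcode'⟩ := ihN rest (s.card + k) (by simp at hlen; omega) hg'
        have hsc : s.card ≤ ts'.length := by omega
        set ch := ts'.take s.card with hch
        set sib := ts'.drop s.card with hsib
        have hchlen : ch.length = s.card := by
          rw [hch, List.length_take]; omega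
        have hsilen : sib.length = k := by
          rw [hsib, List.length_drop]; omega
        have hsortlen : (s.sort (· ≤ ·)).length = s.card := Finset.length_sort _
        set t : LTree A := node ((s.sort (· ≤ ·)).zip ch) with ht
        have hfst : ((s.sort (· ≤ ·)).zip ch).map Prod.fst = s.sort (· ≤ ·) :=
          List.map_fst_zip (by omega)
        have hsnd : ((s.sort (· ≤ ·)).zip ch).map Prod.snd = ch :=
          List.map_snd_zip (by omega)
        have htrie_t : t.IsTrie := by
          refine IsTrie.node _ ?_ ?_
          · rw [hfst]
            exact List.isChain_iff_pairwise.mpr (List.sortedLT_iff_pairwise.mp (Finset.sortedLT_sort s))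
          · intro p hp
            have := (List.of_mem_zip hp).2
            exact htr' _ (List.take_subset _ _ this)
        refine ⟨t :: sib, by simp [hsilen], ?_, ?_⟩
        · intro u hu
          rcases List.mem_cons.mp hu with rfl | hu
          · exact htrie_t
          · exact htr' _ (List.drop_subset _ _ hu)
        · rw [codeF_cons, ht, codeT_node, hfst, hsnd]
          have : (s.sort (· ≤ ·)).toFinset = s := Finset.sort_toFinset ..
          rw [this]
          have : codeF ch ++ codeF sib = codeF ts' := by
            rw [← codeF_append, hch, hsib, List.take_append_drop]
          simp only [List.cons_append, this, hcode']

section Cycle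

variable {l : List (Finset A)} {n : ℕ}

/-- prefix sums of the doubled list -/
private def sC (l : List (Finset A)) (j : ℕ) : ℤ := (sumCard ((l ++ l).take j) : ℤ)

private def sI (l : List (Finset A)) (j : ℕ) : ℤ := sC l j - j

theorem sC_add (i j : ℕ) : sC l (i + j) = sC l i + (sumCard (((l ++ l).drop i).take j) : ℤ) := by
  unfold sC
  rw [List.take_add]
  push_cast [sumCard_append]
  ring

theorem take_append_self (hl : l.length = n) {j : ℕ} (hj : j ≤ n) :
    (l ++ l).take j = l.take j := by
  rw [List.take_append]
  have : j - l.length = 0 := by omega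
  simp [this]

theorem drop_append_self (hl : l.length = n) {i : ℕ} (hi : i ≤ n) :
    (l ++ l).drop i = l.drop i ++ l := by
  rw [List.drop_append]
  have : i - l.length = 0 := by omega
  simp [this]

theorem sI_period (hl : l.length = n) (hs : sumCard l = n - 1) (hn : 1 ≤ n) {j : ℕ} (hj : j ≤ n) :
    sI l (n + j) = sI l j - 1 := by
  unfold sI
  have h1 : sC l (n + j) = sC l n + (sumCard ((l.drop n ++ l).take j) : ℤ) := by
    rw [sC_add, drop_append_self hl le_rfl]
  have h2 : sC l n = (n : ℤ) - 1 := by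
    unfold sC
    rw [take_append_self hl le_rfl, ← hl, List.take_length, hs]
    push_cast
    omega
  have h3 : l.drop n = [] := by
    rw [← hl, List.drop_length]
  have h4 : sC l j = (sumCard (l.take j) : ℤ) := by
    unfold sC; rw [take_append_self hl hj]
  rw [h1, h2, h3, h4]
  simp
  ring

theorem take_rotate (hl : l.length = n) {i j : ℕ} (hi : i ≤ n) (hj : j ≤ n) :
    (l.rotate i).take j = ((l ++ l).drop i).take j := by
  rw [List.rotate_eq_drop_append_take (by omega), drop_append_self hl hi,
    List.take_append, List.take_append, List.take_take]
  congr 2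
  simp only [List.length_drop, hl]
  omega

theorem good_rotate_iff (hl : l.length = n) (hs : sumCard l = n - 1) (hn : 1 ≤ n)
    {i : ℕ} (hi : i < n) :
    Good 1 (l.rotate i) ↔ ∀ j < n, sI l i ≤ sI l (i + j) := by
  have hperm : List.Perm (l.rotate i) l := List.rotate_perm l i
  have hlenrot : (l.rotate i).length = n := by rw [List.length_rotate, hl]
  have hsumrot : sumCard (l.rotate i) = n - 1 := by
    unfold sumCard
    rw [hperm.map Finset.card |>.sum_eq]
    exact hs
  have htake : ∀ j ≤ n, (sumCard ((l.rotate i).take j) : ℤ) = sC l (i + j) - sC l i := by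
    intro j hj
    rw [take_rotate hl (by omega) hj, sC_add]
    ring
  constructor
  · rintro ⟨h1, _⟩ j hj
    have := h1 j (by omega)
    have ht := htake j (by omega)
    unfold sI
    have : (j : ℤ) ≤ sC l (i + j) - sC l i := by
      rw [← ht]
      exact_mod_cast by omega
    push_cast
    omega
  · intro h
    constructor
    · intro j hj
      rw [hlenrot] at hj
      have := h j hj
      have ht := htake j (by omega)
      unfold sI at this
      have hz : (j : ℤ) ≤ (sumCard ((l.rotate i).take j) : ℤ) := by
        rw [ht]
        push_cast at this ⊢
        omega
      have : j < sumCard ((l.rotate i).take j) + 1 := by exact_mod_cast Int.lt_add_one_iff.mpr hz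
      omega
    · rw [hsumrot, hlenrot]
      omega

theorem cycle_lemma (hl : l.length = n) (hs : sumCard l = n - 1) (hn : 1 ≤ n) :
    ∃! i : Fin n, Good 1 (l.rotate i.1) := by
  have hex : ∃ t : ℕ, t < n ∧ sI l t = ((Finset.range n).image (sI l)).min'
      (by simp; omega) := by
    obtain ⟨t, ht, hts⟩ := Finset.mem_image.mp
      (Finset.min'_mem ((Finset.range n).image (sI l)) (by simp; omega))
    exact ⟨t, by simpa using ht, hts⟩
  set m := ((Finset.range n).image (sI l)).min' (by simp; omega) with hm
  have hmin : ∀ t < n, m ≤ sI l t := by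
    intro t ht
    apply Finset.min'_le
    exact Finset.mem_image.mpr ⟨t, by simpa using ht, rfl⟩
  classical
  set i := Nat.find hex with hi
  obtain ⟨hiln, him⟩ := Nat.find_spec hex
  have hP : ∀ j < n, sI l i ≤ sI l (i + j) := by
    intro j hj
    rcases lt_or_ge (i + j) n with h | h
    · rw [him]; exact hmin _ h
    · have ht : i + j = n + (i + j - n) := by omega
      have htn : i + j - n < i := by omega
      have h5 := sI_period hl hs hn (j := i + j - n) (by omega)
      rw [ht, h5]
      have h6 : sI l (i + j - n) ≠ m := by
        intro hcontra
        exact Nat.find_min hex htn ⟨by omega, hcontra⟩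
      have h7 := hmin (i + j - n) (by omega)
      rw [him]
      omega
  refine ⟨⟨i, hiln⟩, (good_rotate_iff hl hs hn hiln).mpr hP, ?_⟩
  rintro ⟨i', hi'n⟩ hgood'
  have hP' := (good_rotate_iff hl hs hn hi'n).mp hgood'
  simp only [Fin.mk.injEq]
  by_contra hne
  -- wlog-style: two distinct good indices i, i' both < n
  have key : ∀ a b : ℕ, a < b → b < n → (∀ j < n, sI l a ≤ sI l (a + j)) →
      (∀ j < n, sI l b ≤ sI l (b + j)) → False := by
    intro a b hab hbn hPa hPb
    have h1 : sI l a ≤ sI l b := by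
      have := hPa (b - a) (by omega)
      rwa [show a + (b - a) = b by omega] at this
    have h2 : sI l b ≤ sI l (n + a) := by
      have := hPb (a + n - b) (by omega)
      rwa [show b + (a + n - b) = n + a by omega] at this
    have h3 : sI l (n + a) = sI l a - 1 := sI_period hl hs hn (by omega)
    omega
  rcases lt_trichotomy i i' with h | h | h
  · exact key i i' h hi'n hP hP'
  · exact hne h.symm
  · exact key i' i h hiln hP' hP

end Cycle

instance : Inhabited (LTree A) := ⟨node []⟩

theorem decodeT_spec {l : List (Finset A)} (h : Good 1 l) :
    ((decodeF 1 l).headI).IsTrie ∧ codeT ((decodeF 1 l).headI) = l := by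
  obtain ⟨ts, hlen, htr, hcode⟩ := exists_of_good l.length l 1 le_rfl h
  cases ts with
  | nil => simp at hlen
  | cons t ts' =>
    cases ts' with
    | cons u us => simp at hlen
    | nil =>
      have htrie : t.IsTrie := htr t (List.mem_cons_self)
      have hct : codeT t = l := by simpa using hcode
      rw [← hct, decodeF_codeT htrie]
      exact ⟨htrie, rfl⟩

def trieCodeEquiv (n : ℕ) (nc : A → ℕ) :
    {T : LTree A // T.IsTrie ∧ T.size = n ∧ ∀ c, T.labelCount c = nc c} ≃
    {l : List (Finset A) // Good 1 l ∧ l.length = n ∧ ∀ c, cnt c l = nc c} where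
  toFun T := ⟨codeT T.1, good_codeT T.2.1, by rw [← length_codeT]; exact T.2.2.1,
    fun c => by rw [← cnt_codeT c T.2.1]; exact T.2.2.2 c⟩
  invFun l := ⟨(decodeF 1 l.1).headI, (decodeT_spec l.2.1).1,
     by
       rw [length_codeT, (decodeT_spec l.2.1).2]
       exact l.2.2.1,
     fun c => by
       rw [cnt_codeT c (decodeT_spec l.2.1).1, (decodeT_spec l.2.1).2]
       exact l.2.2.2 c⟩
  left_inv T := Subtype.ext (by
    show (decodeF 1 (codeT T.1)).headI = T.1
    rw [decodeF_codeT T.2.1]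
    rfl)
  right_inv l := Subtype.ext (decodeT_spec l.2.1).2

theorem sumCard_eq_sum_cnt [Fintype A] (l : List (Finset A)) :
    sumCard l = ∑ c, cnt c l := by
  induction l with
  | nil => simp
  | cons s l ih =>
    rw [sumCard_cons, ih]
    have h1 : ∑ c, cnt c (s :: l) = ∑ c, ((if c ∈ s then 1 else 0) + cnt c l) := rfl
    rw [h1, Finset.sum_add_distrib]
    congr 1
    simp [Finset.sum_ite_mem]

theorem cnt_eq_card_filter (l : List (Finset A)) (c : A) :
    cnt c l = (Finset.univ.filter fun i : Fin l.length => c ∈ l.get i).card := by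
  conv_lhs => rw [← List.ofFn_get l]
  rw [cnt, List.map_ofFn, List.sum_ofFn, Finset.card_filter]
  rfl

theorem cnt_perm {l l' : List (Finset A)} (h : List.Perm l l') (c : A) : cnt c l = cnt c l' :=
  List.Perm.sum_eq (h.map _)

theorem cnt_ofFn {n : ℕ} (g : Fin n → Finset A) (c : A) :
    cnt c (List.ofFn g) = (Finset.univ.filter fun i => c ∈ g i).card := by
  rw [cnt, List.map_ofFn, List.sum_ofFn, Finset.card_filter]
  rfl

section Count

variable [Fintype A] (n : ℕ) (nc : A → ℕ)

noncomputable def rotGoodEquiv1 (hn : 1 ≤ n) (hsum : ∑ c, nc c = n - 1) :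
    {p : ({l : List (Finset A) // l.length = n ∧ ∀ c, cnt c l = nc c} × Fin n) //
        Good 1 (p.1.1.rotate p.2.1)} ≃
      {l : List (Finset A) // l.length = n ∧ ∀ c, cnt c l = nc c} where
  toFun p := p.1.1
  invFun w :=
    have hsc : sumCard w.1 = n - 1 := by
      rw [sumCard_eq_sum_cnt]
      rw [Finset.sum_congr rfl fun c _ => w.2.2 c]
      exact hsum
    ⟨(w, (cycle_lemma w.2.1 hsc hn).exists.choose),
      (cycle_lemma w.2.1 hsc hn).exists.choose_spec⟩
  left_inv p := by
    obtain ⟨⟨w, i⟩, hp⟩ := p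
    have hsc : sumCard w.1 = n - 1 := by
      rw [sumCard_eq_sum_cnt]
      rw [Finset.sum_congr rfl fun c _ => w.2.2 c]
      exact hsum
    apply Subtype.ext
    exact congrArg (Prod.mk w)
      ((cycle_lemma w.2.1 hsc hn).unique (cycle_lemma w.2.1 hsc hn).exists.choose_spec hp)
  right_inv w := rfl

def rotGoodEquiv2 (hn : 1 ≤ n) :
    {p : ({l : List (Finset A) // l.length = n ∧ ∀ c, cnt c l = nc c} × Fin n) //
        Good 1 (p.1.1.rotate p.2.1)} ≃
      {l : List (Finset A) // Good 1 l ∧ l.length = n ∧ ∀ c, cnt c l = nc c} × Fin n where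
  toFun p := (⟨p.1.1.1.rotate p.1.2.1, p.2,
      by rw [List.length_rotate]; exact p.1.1.2.1,
      fun c => by rw [cnt_perm (List.rotate_perm _ _) c]; exact p.1.1.2.2 c⟩, p.1.2)
  invFun q := ⟨(⟨q.1.1.rotate (n - q.2.1),
      by rw [List.length_rotate]; exact q.1.2.2.1,
      fun c => by rw [cnt_perm (List.rotate_perm _ _) c]; exact q.1.2.2.2 c⟩, q.2),
      by
        have hlen : q.1.1.length = n := q.1.2.2.1
        have h2 : (q.1.1.rotate (n - q.2.1)).rotate q.2.1 = q.1.1 := by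
          rw [List.rotate_rotate]
          have h3 : n - q.2.1 + q.2.1 = n := by omega
          have h4 := List.rotate_length q.1.1
          rw [hlen] at h4
          rw [h3, h4]
        simpa [h2] using q.1.2.1⟩
  left_inv p := by
    obtain ⟨⟨w, i⟩, hp⟩ := p
    apply Subtype.ext
    refine congrArg (fun x => (x, i)) (Subtype.ext ?_)
    show (w.1.rotate i.1).rotate (n - i.1) = w.1
    rw [List.rotate_rotate]
    have h1 : i.1 + (n - i.1) = n := by omega
    have h4 := List.rotate_length w.1
    rw [w.2.1] at h4
    rw [h1, h4]
  right_inv q := by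
    obtain ⟨g, i⟩ := q
    refine congrArg (fun x => (x, i)) (Subtype.ext ?_)
    show (g.1.rotate (n - i.1)).rotate i.1 = g.1
    rw [List.rotate_rotate]
    have h1 : n - i.1 + i.1 = n := by omega
    have h4 := List.rotate_length g.1
    rw [g.2.2.1] at h4
    rw [h1, h4]

def transposeEquiv : (Fin n → Finset A) ≃ (A → Finset (Fin n)) where
  toFun g c := Finset.univ.filter fun i => c ∈ g i
  invFun h i := Finset.univ.filter fun c => i ∈ h c
  left_inv g := funext fun i => by ext c; simp
  right_inv h := funext fun c => by ext i; simp

def listFunEquiv : {l : List (Finset A) // l.length = n ∧ ∀ c, cnt c l = nc c} ≃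
    {g : Fin n → Finset A // ∀ c, (Finset.univ.filter fun i => c ∈ g i).card = nc c} where
  toFun w := ⟨fun i => w.1.get (Fin.cast w.2.1.symm i), by
    intro c
    have hw : List.ofFn (fun i : Fin n => w.1.get (Fin.cast w.2.1.symm i)) = w.1 := by
      apply List.ext_get (by simp [w.2.1])
      intro i h1 h2
      simp [List.get_ofFn]
    rw [← cnt_ofFn, hw]
    exact w.2.2 c⟩
  invFun g := ⟨List.ofFn g.1, by simp, fun c => by rw [cnt_ofFn]; exact g.2 c⟩
  left_inv w := by
    apply Subtype.ext
    apply List.ext_get (by simp [w.2.1])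
    intro i h1 h2
    simp [List.get_ofFn]
  right_inv g := by
    apply Subtype.ext
    funext i
    simp [List.get_ofFn]

def bigEquiv (hn : 1 ≤ n) : {l : List (Finset A) // l.length = n ∧ ∀ c, cnt c l = nc c} ≃
    ∀ c : A, {s : Finset (Fin n) // s.card = nc c} :=
  (listFunEquiv n nc).trans ((Equiv.subtypeEquiv (transposeEquiv n) fun g => Iff.rfl).trans
    (Equiv.subtypePiEquivPi (p := fun c (s : Finset (Fin n)) => s.card = nc c)))

end Count
end LTree

/-- For `n ≥ 1` and nonnegative integers `(n_c)_{c ∈ Σ}` with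
`∑_c n_c = n - 1`, the number of tries with `n` nodes in which each symbol `c`
labels exactly `n_c` edges equals `(1/n) ∏_{c ∈ Σ} C(n, n_c)`
(stated equivalently with the factor `n` multiplied on the left). -/
theorem count_tries_with_symbol_distribution
    (Sigma : Type) [Fintype Sigma] [LinearOrder Sigma]
    (n : ℕ) (hn : 1 ≤ n) (nc : Sigma → ℕ)
    (hsum : ∑ c, nc c = n - 1) :
    n * Nat.card {T : LTree Sigma //
        T.IsTrie ∧ T.size = n ∧ ∀ c : Sigma, T.labelCount c = nc c} =
      ∏ c : Sigma, Nat.choose n (nc c) := by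
  classical
  have h0 : Nat.card {T : LTree Sigma //
        T.IsTrie ∧ T.size = n ∧ ∀ c : Sigma, T.labelCount c = nc c}
      = Nat.card {l : List (Finset Sigma) // LTree.Good 1 l ∧ l.length = n ∧
          ∀ c, LTree.cnt c l = nc c} :=
    Nat.card_congr (LTree.trieCodeEquiv n nc)
  have h1 : Nat.card ({l : List (Finset Sigma) // LTree.Good 1 l ∧ l.length = n ∧
          ∀ c, LTree.cnt c l = nc c} × Fin n)
      = Nat.card {l : List (Finset Sigma) // LTree.Good 1 l ∧ l.length = n ∧
          ∀ c, LTree.cnt c l = nc c} * n := by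
    rw [Nat.card_prod, Nat.card_eq_fintype_card (α := Fin n), Fintype.card_fin]
  have h2 := Nat.card_congr (LTree.rotGoodEquiv2 n nc hn)
  have h3 := Nat.card_congr (LTree.rotGoodEquiv1 n nc hn hsum)
  have h4 := Nat.card_congr (LTree.bigEquiv n nc hn)
  have h5 : Nat.card (∀ c : Sigma, {s : Finset (Fin n) // s.card = nc c})
      = ∏ c : Sigma, Nat.card {s : Finset (Fin n) // s.card = nc c} := Nat.card_pi
  have h6 : ∀ c : Sigma, Nat.card {s : Finset (Fin n) // s.card = nc c}
      = n.choose (nc c) := by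
    intro c
    rw [Nat.card_eq_fintype_card, Fintype.card_finset_len, Fintype.card_fin]
  rw [h0, Nat.mul_comm, ← h1, ← h2, h3, h4, h5]
  exact Finset.prod_congr rfl fun c _ => h6 c
end

section
/- Let n ≥ 1, let W and Σ be finite sets, and let (n_w)_{w ∈ W} and (n_{w,c})_{w ∈ W, c ∈ Σ} be nonnegative integers with n_{w,c} ≤ n_w. Suppose W' ⊆ W × Σ^+ refines W in the sense: there are integers n'_{w'} , n'_{w',c} with, for every w ∈ W, n_w = Σ over the refinements w' of w of n'_{w'}, and n_{w,c} = Σ over refinements w' of w of n'_{w',c}. Then the refined entropy sum Σ_{w'} Σ_c [ n'_{w',c} log₂(n'_{w'}/n'_{w',c}) + (n'_{w'} - n'_{w',c}) log₂(n'_{w'}/(n'_{w'} - n'_{w',c})) ] is at most the coarse entropy sum Σ_{w} Σ_c [ n_{w,c} log₂(n_w/n_{w,c}) + (n_w - n_{w,c}) log₂(n_w/(n_w - n_{w,c})) ]. -/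
open Real

/-- The (unnormalized) binary entropy contribution of a context with `N` nodes,
`Nc` of which have an outgoing edge labeled by the given symbol
(convention `0·log(x/0) = 0`). -/
noncomputable def entTerm (N Nc : ℕ) : ℝ :=
  (Nc : ℝ) * logb 2 ((N : ℝ) / (Nc : ℝ)) +
    ((N : ℝ) - (Nc : ℝ)) * logb 2 ((N : ℝ) / ((N : ℝ) - (Nc : ℝ)))

/-- The log-sum inequality, for `a i ≤ b i` (with the convention `0·log(x/0) = 0`,
which holds automatically since the factor `a i = 0` kills the term). -/
lemma logsum_aux {ι : Type*} (s : Finset ι) (a b : ι → ℝ)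
    (ha : ∀ i ∈ s, 0 ≤ a i) (hab : ∀ i ∈ s, a i ≤ b i) :
    ∑ i ∈ s, a i * Real.log (b i / a i) ≤
      (∑ i ∈ s, a i) * Real.log ((∑ i ∈ s, b i) / (∑ i ∈ s, a i)) := by
  set A := ∑ i ∈ s, a i with hA
  set B := ∑ i ∈ s, b i with hB
  have hA0 : 0 ≤ A := Finset.sum_nonneg ha
  rcases eq_or_lt_of_le hA0 with h0 | hApos
  · have hall : ∀ i ∈ s, a i = 0 := by
      intro i hi
      exact (Finset.sum_eq_zero_iff_of_nonneg ha).mp h0.symm i hi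
    have : ∑ i ∈ s, a i * Real.log (b i / a i) = 0 := by
      apply Finset.sum_eq_zero; intro i hi; rw [hall i hi]; ring
    rw [this, ← h0]; ring_nf; simp
  · have hBA : A ≤ B := Finset.sum_le_sum hab
    have hBpos : 0 < B := lt_of_lt_of_le hApos hBA
    have key : ∀ i ∈ s, a i * Real.log (b i / a i) ≤
        a i * Real.log (B / A) + (A / B) * b i - a i := by
      intro i hi
      rcases eq_or_lt_of_le (ha i hi) with h0 | hpos
      · rw [← h0]
        have : 0 ≤ (A / B) * b i := by
          apply mul_nonneg (div_nonneg hApos.le hBpos.le)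
          exact le_trans (ha i hi) (hab i hi)
        simpa using this
      · have hbpos : 0 < b i := lt_of_lt_of_le hpos (hab i hi)
        have hx : 0 < b i * A / (a i * B) :=
          div_pos (mul_pos hbpos hApos) (mul_pos hpos hBpos)
        have hlog := Real.log_le_sub_one_of_pos hx
        have heq : Real.log (b i / a i) = Real.log (B / A) + Real.log (b i * A / (a i * B)) := by
          rw [← Real.log_mul (by positivity) (by positivity)]
          congr 1
          field_simp
        rw [heq]
        have := mul_le_mul_of_nonneg_left hlog (ha i hi)
        calc a i * (Real.log (B / A) + Real.log (b i * A / (a i * B)))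
            = a i * Real.log (B / A) + a i * Real.log (b i * A / (a i * B)) := by ring
          _ ≤ a i * Real.log (B / A) + a i * (b i * A / (a i * B) - 1) := by linarith
          _ = a i * Real.log (B / A) + (A / B) * b i - a i := by
              field_simp; ring
    calc ∑ i ∈ s, a i * Real.log (b i / a i)
        ≤ ∑ i ∈ s, (a i * Real.log (B / A) + (A / B) * b i - a i) :=
          Finset.sum_le_sum key
      _ = A * Real.log (B / A) + (A / B) * B - A := by
          rw [Finset.sum_sub_distrib, Finset.sum_add_distrib, ← Finset.sum_mul,
            ← Finset.mul_sum]
      _ = A * Real.log (B / A) := by field_simp; ring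

/-- Superadditivity of `entTerm` under merging contexts. -/
lemma entsum_aux {ι : Type*} (s : Finset ι) (N Nc : ι → ℕ) (h : ∀ i ∈ s, Nc i ≤ N i) :
    ∑ i ∈ s, entTerm (N i) (Nc i) ≤ entTerm (∑ i ∈ s, N i) (∑ i ∈ s, Nc i) := by
  have hl2 : (0:ℝ) < Real.log 2 := Real.log_pos one_lt_two
  have h1 := logsum_aux s (fun i => (Nc i : ℝ)) (fun i => (N i : ℝ))
    (fun i _ => Nat.cast_nonneg _) (fun i hi => by exact_mod_cast h i hi)
  have h2 := logsum_aux s (fun i => (N i : ℝ) - (Nc i : ℝ)) (fun i => (N i : ℝ))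
    (fun i hi => by have := h i hi; simp only [sub_nonneg]; exact_mod_cast this)
    (fun i hi => by simp [Nat.cast_nonneg])
  rw [Finset.sum_sub_distrib] at h2
  simp only [entTerm, Real.logb, mul_div_assoc', ← add_div]
  rw [← Finset.sum_div, div_le_div_iff_of_pos_right hl2, Finset.sum_add_distrib]
  push_cast
  exact add_le_add h1 h2

/-- Refining contexts does not increase the total (unnormalized)
entropy.  Here `W'` refines `W` via a map `φ : W' → W`: for each coarse context `w`,
`n_w` (resp. `n_{w,c}`) is the sum of `n'_{w'}` (resp. `n'_{w',c}`) over the refined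
contexts `w'` with `φ w' = w`.  Then the refined entropy sum is at most the coarse one. -/
theorem refined_entropy_le_coarse
    (W W' Sigma : Type) [Fintype W] [Fintype W'] [Fintype Sigma] [DecidableEq W]
    (φ : W' → W)
    (nw : W → ℕ) (nwc : W → Sigma → ℕ)
    (nw' : W' → ℕ) (nwc' : W' → Sigma → ℕ)
    (hle : ∀ w c, nwc w c ≤ nw w)
    (hle' : ∀ w' c, nwc' w' c ≤ nw' w')
    (href : ∀ w, nw w = ∑ w' ∈ Finset.univ.filter (fun w' => φ w' = w), nw' w')
    (hrefc : ∀ w c, nwc w c = ∑ w' ∈ Finset.univ.filter (fun w' => φ w' = w), nwc' w' c) :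
    ∑ w' : W', ∑ c : Sigma, entTerm (nw' w') (nwc' w' c) ≤
      ∑ w : W, ∑ c : Sigma, entTerm (nw w) (nwc w c) := by
  rw [← Finset.sum_fiberwise Finset.univ φ (fun w' => ∑ c : Sigma, entTerm (nw' w') (nwc' w' c))]
  apply Finset.sum_le_sum
  intro w _
  rw [Finset.sum_comm]
  apply Finset.sum_le_sum
  intro c _
  rw [href w, hrefc w c]
  exact entsum_aux _ _ _ (fun w'' _ => hle' w'' c)
end

section
/- Let [l, l+s) ⊆ [0, 1) be a half-open interval with s > 0, and let μ = l + s/2. Let d = ⌈log₂(2/s)⌉ and let μ_d = ⌊μ·2^d⌋/2^d be the truncation of μ to its first d binary digits. Then μ_d ∈ [l, l+s). -/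
open Real

/-- **truncation lemma of arithmetic coding.**
Let `[l, l+s) ⊆ [0,1)` with `s > 0`, `μ = l + s/2`, `d = ⌈log₂(2/s)⌉` and let
`μ_d = ⌊μ·2^d⌋/2^d` be `μ` truncated to its first `d` binary digits.
Then `μ_d ∈ [l, l+s)`. -/
theorem arithmetic_coding_truncation (l s : ℝ) (hl : 0 ≤ l) (hs : 0 < s)
    (hls : l + s ≤ 1) :
    l ≤ (⌊(l + s / 2) * 2 ^ (⌈logb 2 (2 / s)⌉ : ℤ)⌋ : ℝ) / 2 ^ (⌈logb 2 (2 / s)⌉ : ℤ) ∧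
    (⌊(l + s / 2) * 2 ^ (⌈logb 2 (2 / s)⌉ : ℤ)⌋ : ℝ) / 2 ^ (⌈logb 2 (2 / s)⌉ : ℤ) < l + s := by
  set d : ℤ := ⌈logb 2 (2 / s)⌉ with hd
  have hpow : (0:ℝ) < 2 ^ d := by positivity
  have hkey : 2 / s ≤ 2 ^ d := by
    have h1 : logb 2 (2 / s) ≤ (d : ℝ) := Int.le_ceil _
    have h2 : (2:ℝ) ^ (logb 2 (2/s)) ≤ (2:ℝ) ^ (d:ℝ) :=
      Real.rpow_le_rpow_left_iff (by norm_num : (1:ℝ) < 2) |>.2 h1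
    rwa [Real.rpow_logb (by norm_num) (by norm_num) (by positivity),
      Real.rpow_intCast] at h2
  have hinv : (2:ℝ)^(-d) ≤ s / 2 := by
    rw [zpow_neg, inv_le_comm₀ hpow (by positivity), inv_div]
    exact hkey
  constructor
  · rw [le_div_iff₀ hpow]
    have h1 : (l + s/2) * 2 ^ d - 1 < (⌊(l + s / 2) * 2 ^ d⌋ : ℝ) := by
      have := Int.sub_one_lt_floor ((l + s / 2) * 2 ^ d)
      linarith
    have h2 : 1 ≤ (s/2) * 2^d := by
      have : (2:ℝ)^(-d) * 2^d = 1 := by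
        rw [← zpow_add₀ (by norm_num : (2:ℝ) ≠ 0)]; simp
      nlinarith [mul_le_mul_of_nonneg_right hinv (le_of_lt hpow)]
    nlinarith
  · rw [div_lt_iff₀ hpow]
    have h1 : (⌊(l + s / 2) * 2 ^ d⌋ : ℝ) ≤ (l + s/2) * 2 ^ d := Int.floor_le _
    nlinarith
end

section
/- Let T be the complete balanced binary trie of height h ≥ 1 over the alphabet {a, b}, with n = 2^{h+1} - 1 nodes, and let u_1, ..., u_n be its nodes in co-lexicographic order (sorted by the reversal-free co-lexicographic order of their incoming root-to-node strings). Then in the sequence out(u_1), ..., out(u_n), every maximal run of consecutive leaves (nodes u_i with out(u_i) = ∅), except possibly the last one containing u_n, has length exactly 2, and the total number of XBWT runs r satisfies r = (n+1)/2. -/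
/-- A node of the complete balanced binary trie of height `h`: a depth `d ≤ h`
together with the sequence of binary branch choices along the root-to-node path
(`false` = label `a`, `true` = label `b`). -/
def BNode (h : ℕ) : Type := Σ d : Fin (h + 1), Fin d → Bool

instance (h : ℕ) : Fintype (BNode h) := by unfold BNode; infer_instance
instance (h : ℕ) : DecidableEq (BNode h) := by unfold BNode; infer_instance

/-- The string (root-to-node path labels) reaching a node. -/
def BNode.str {h : ℕ} (x : BNode h) : List Bool := List.ofFn x.2

/-- Co-lexicographic order: compare the reaching strings character by character
from right to left (i.e. lexicographic order of the reversed strings, with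
`false < true` and the empty string smallest). -/
def BNode.colexLt {h : ℕ} (x z : BNode h) : Prop :=
  List.Lex (· < ·) x.str.reverse z.str.reverse

/-- A node is a leaf iff it has depth `h`. -/
def BNode.isLeaf {h : ℕ} (x : BNode h) : Prop := (x.1 : ℕ) = h

/-- The set of labels of edges outgoing from a node: `∅` at a leaf,
the full binary alphabet at an internal node. -/
def BNode.out {h : ℕ} (x : BNode h) : Set Bool :=
  {c : Bool | (x.1 : ℕ) < h}

namespace XBWTProof
open List

lemma not_lex_nil {l : List Bool} : ¬ List.Lex (· < ·) l [] := fun hx => by cases hx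

lemma lex_nil_of_ne {l : List Bool} (hl : l ≠ []) : List.Lex (· < ·) [] l := by
  cases l with
  | nil => exact absurd rfl hl
  | cons a t => exact List.Lex.nil

lemma lex_append_pair : ∀ R : List Bool, List.Lex (· < ·) (R ++ [false]) (R ++ [true])
  | [] => List.Lex.rel (by decide)
  | a :: R => List.Lex.cons (lex_append_pair R)

lemma lex_self_append : ∀ l : List Bool, List.Lex (· < ·) l (l ++ [true])
  | [] => List.Lex.nil
  | a :: t => List.Lex.cons (lex_self_append t)

lemma lex_dropLast_self : ∀ l : List Bool, l ≠ [] → List.Lex (· < ·) l.dropLast l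
  | [], hl => absurd rfl hl
  | [a], _ => List.Lex.nil
  | a :: b :: t, _ => List.Lex.cons (lex_dropLast_self (b :: t) (by simp))

lemma lex_between : ∀ (R s : List Bool),
    List.Lex (· < ·) (R ++ [false]) s → List.Lex (· < ·) s (R ++ [true]) →
    R.length + 1 < s.length := by
  intro R
  induction R with
  | nil =>
    intro s h1 h2
    cases h1 with
    | rel hab =>
      rename_i b l2
      have hb : b = true := by
        cases b
        · exact absurd hab (by decide)
        · rfl
      subst hb
      cases h2 with
      | rel h' => exact absurd h' (by decide)
      | cons h' => exact absurd h' not_lex_nil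
    | cons h' =>
      cases h' with
      | nil => simp
  | cons a R ih =>
    intro s h1 h2
    cases h1 with
    | rel hab =>
      cases h2 with
      | rel hba =>
        simp [Bool.lt_iff] at hab hba
        simp_all
      | cons h' => exact absurd hab (lt_irrefl _)
    | cons h' =>
      cases h2 with
      | rel hba => exact absurd hba (lt_irrefl _)
      | cons h'' =>
        have := ih _ h' h''
        simp only [List.length_cons] at *
        omega

lemma lex_dropLast_of_lex : ∀ (R S : List Bool), S.length = R.length + 1 →
    List.Lex (· < ·) (R ++ [true]) S → List.Lex (· < ·) (R ++ [true]) S.dropLast := by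
  intro R
  induction R with
  | nil =>
    intro S hlen hlex
    obtain ⟨b, T, rfl⟩ : ∃ b T, S = b :: T := by
      cases S with
      | nil => simp at hlen
      | cons b T => exact ⟨_, _, rfl⟩
    have hT : T = [] := by simpa using hlen
    subst hT
    cases hlex with
    | rel hab =>
      have : b = true := by cases b <;> simp_all [Bool.lt_iff]
      subst this
      exact absurd hab (by decide)
    | cons h' => cases h'
  | cons a R ih =>
    intro S hlen hlex
    obtain ⟨b, T, rfl⟩ : ∃ b T, S = b :: T := by
      cases S with
      | nil => simp at hlen
      | cons b T => exact ⟨_, _, rfl⟩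
    obtain ⟨c, T', rfl⟩ : ∃ c T', T = c :: T' := by
      cases T with
      | nil => simp only [List.length_nil, List.length_cons] at hlen; omega
      | cons c T' => exact ⟨_, _, rfl⟩
    have hd : (b :: c :: T').dropLast = b :: (c :: T').dropLast := rfl
    cases hlex with
    | rel hab => rw [hd]; exact List.Lex.rel hab
    | cons h' =>
      rw [hd]
      exact List.Lex.cons (ih _ (by simp only [List.length_cons] at hlen ⊢; omega) h')


variable {h : ℕ}

def rstr (x : BNode h) : List Bool := x.str.reverse

lemma rstr_length (x : BNode h) : (rstr x).length = (x.1 : ℕ) := by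
  simp [rstr, BNode.str]

lemma rstr_le (x : BNode h) : (rstr x).length ≤ h := by
  have := x.1.isLt
  rw [rstr_length]
  omega

lemma colex_iff {x z : BNode h} :
    BNode.colexLt x z ↔ List.Lex (· < ·) (rstr x) (rstr z) := Iff.rfl

lemma leaf_iff {x : BNode h} : BNode.isLeaf x ↔ (rstr x).length = h := by
  rw [rstr_length]; rfl

lemma mem_out {c : Bool} {x : BNode h} : c ∈ BNode.out x ↔ (x.1 : ℕ) < h := Iff.rfl

lemma not_leaf_iff {x : BNode h} : ¬ BNode.isLeaf x ↔ (x.1 : ℕ) < h := by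
  have := x.1.isLt
  unfold BNode.isLeaf
  omega

lemma snd_eq (x : BNode h) (i : Fin (x.1 : ℕ)) : x.2 i = x.str.getD i false := by
  have hi : (i : ℕ) < x.str.length := by simp [BNode.str]
  rw [List.getD_eq_getElem _ _ hi]
  show x.2 i = (List.ofFn x.2)[(i:ℕ)]
  exact (List.getElem_ofFn _).symm

lemma str_inj {x z : BNode h} (e : x.str = z.str) : x = z := by
  have hlen : ((x.1 : Fin (h+1)) : ℕ) = ((z.1 : Fin (h+1)) : ℕ) := by
    have := congrArg List.length e
    simpa [BNode.str] using this
  refine Sigma.ext (Fin.ext hlen) ?_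
  rw [Fin.heq_fun_iff hlen]
  intro i
  rw [snd_eq x i, snd_eq z ⟨(i : ℕ), hlen ▸ i.2⟩, e]

lemma rstr_inj {x z : BNode h} (e : rstr x = rstr z) : x = z :=
  str_inj (List.reverse_injective e)

def mkN (l : List Bool) (hl : l.length ≤ h) : BNode h :=
  ⟨⟨l.length, by omega⟩, fun i => l.reverse.getD i false⟩

lemma str_mkN (l : List Bool) (hl : l.length ≤ h) : (mkN l hl).str = l.reverse := by
  apply List.ext_getElem
  · simp [BNode.str, mkN]
  · intro i h1 h2
    simp [BNode.str, mkN, List.getD_eq_getElem]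

lemma rstr_mkN (l : List Bool) (hl : l.length ≤ h) : rstr (mkN l hl) = l := by
  simp [rstr, str_mkN]

lemma leaf_decomp (hh : 1 ≤ h) (x : BNode h) (hx : BNode.isLeaf x) :
    ∃ R : List Bool, R.length + 1 = h ∧ ∃ c, rstr x = R ++ [c] := by
  rcases List.eq_nil_or_concat (rstr x) with hnil | ⟨R, c, hRc⟩
  · rw [leaf_iff, hnil] at hx
    simp at hx
    omega
  · rw [List.concat_eq_append] at hRc
    refine ⟨R, ?_, c, hRc⟩
    have := leaf_iff.mp hx
    rw [hRc] at this
    simp at this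
    omega


end XBWTProof

open XBWTProof in

/-- Let `T` be the complete balanced binary trie of height
`h ≥ 1`, `n = 2^(h+1) - 1`, and let `u 0, ..., u (n-1)` enumerate its nodes in
co-lexicographic order.  Then (1) every maximal run of consecutive leaves in
`out (u 0), ..., out (u (n-1))`, except possibly the one containing the last
node, has length exactly 2; and (2) the number of XBWT runs
`r = ∑_{c} #{ i | c ∈ out(u i) ∧ (i = n-1 ∨ c ∉ out(u (i+1))) }`
satisfies `r = (n+1)/2`. -/
theorem complete_binary_trie_xbwt_runs (h : ℕ) (hh : 1 ≤ h)
    (u : Fin (2 ^ (h + 1) - 1) → BNode h)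
    (hbij : Function.Bijective u)
    (hmono : ∀ i j : Fin (2 ^ (h + 1) - 1), i < j → BNode.colexLt (u i) (u j)) :
    (∀ i j : ℕ, ∀ hij : i ≤ j, ∀ hjn : j + 1 < 2 ^ (h + 1) - 1,
      (∀ t (ht : t < 2 ^ (h + 1) - 1), i ≤ t → t ≤ j → BNode.isLeaf (u ⟨t, ht⟩)) →
      (∀ hi0 : 0 < i, ¬ BNode.isLeaf (u ⟨i - 1, by omega⟩)) →
      ¬ BNode.isLeaf (u ⟨j + 1, by omega⟩) →
      j = i + 1) ∧
    (∑ c : Bool, Nat.card {i : Fin (2 ^ (h + 1) - 1) //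
        c ∈ BNode.out (u i) ∧
        ∀ hlt : (i : ℕ) + 1 < 2 ^ (h + 1) - 1, c ∉ BNode.out (u ⟨(i : ℕ) + 1, hlt⟩)})
      = (2 ^ (h + 1) - 1 + 1) / 2 := by
  have hn3 : 3 ≤ (2 ^ (h + 1) - 1) := by
    have h4 : 4 ≤ 2 ^ (h + 1) := by
      calc (4:ℕ) = 2 ^ 2 := by norm_num
      _ ≤ 2 ^ (h + 1) := Nat.pow_le_pow_right (by norm_num) (by omega)
    omega
  -- basic order facts
  have hirr : ∀ x : BNode h, ¬ BNode.colexLt x x := by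
    intro x hx
    rw [colex_iff] at hx
    exact irrefl_of (List.Lex (· < ·)) _ hx
  have hlt_of : ∀ i j : Fin (2 ^ (h + 1) - 1), BNode.colexLt (u i) (u j) → i < j := by
    intro i j hij
    rcases lt_trichotomy i j with hc | hc | hc
    · exact hc
    · subst hc; exact absurd hij (hirr _)
    · exfalso
      have h2 := hmono j i hc
      rw [colex_iff] at hij h2
      exact asymm_of (List.Lex (· < ·)) h2 hij
  have hbetween : ∀ (R : List Bool), R.length + 1 = h → ∀ x z y : BNode h,
      rstr x = R ++ [false] → rstr y = R ++ [true] →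
      BNode.colexLt x z → BNode.colexLt z y → False := by
    intro R hR x z y hx hy h1 h2
    rw [colex_iff, hx] at h1
    rw [colex_iff, hy] at h2
    have hb := lex_between R (rstr z) h1 h2
    have hb2 := rstr_le z
    omega
  have hpair : ∀ (i k : Fin (2 ^ (h + 1) - 1)) (R : List Bool), R.length + 1 = h →
      rstr (u i) = R ++ [false] → rstr (u k) = R ++ [true] → (k : ℕ) = (i : ℕ) + 1 := by
    intro i k R hR hi hk
    have h1 : BNode.colexLt (u i) (u k) := by
      rw [colex_iff, hi, hk]; exact lex_append_pair R
    have hik := hlt_of _ _ h1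
    rw [Fin.lt_def] at hik
    by_contra hne
    have h2 : (i : ℕ) + 1 < (k : ℕ) := by omega
    have hi1 : (i : ℕ) + 1 < (2 ^ (h + 1) - 1) := lt_trans h2 k.isLt
    have ha := hmono i ⟨(i : ℕ) + 1, hi1⟩ (by rw [Fin.lt_def]; simp)
    have hb := hmono ⟨(i : ℕ) + 1, hi1⟩ k (by rw [Fin.lt_def]; simpa using h2)
    exact hbetween R hR _ _ _ hi hk ha hb
  have hsucc : ∀ (i : Fin (2 ^ (h + 1) - 1)) (R : List Bool), R.length + 1 = h →
      rstr (u i) = R ++ [false] →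
      (i : ℕ) + 1 < (2 ^ (h + 1) - 1) ∧ ∀ (k : Fin (2 ^ (h + 1) - 1)), (k : ℕ) = (i : ℕ) + 1 → rstr (u k) = R ++ [true] := by
    intro i R hR hi
    obtain ⟨k, hk⟩ := hbij.2 (mkN (R ++ [true]) (by simp; omega))
    have hky : rstr (u k) = R ++ [true] := by rw [hk, rstr_mkN]
    have hk1 := hpair i k R hR hi hky
    have hlt : (i : ℕ) + 1 < (2 ^ (h + 1) - 1) := by have := k.isLt; omega
    refine ⟨hlt, fun k' hk' => ?_⟩
    have : k' = k := Fin.ext (by omega)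
    rw [this, hky]
  have hpred : ∀ (k : Fin (2 ^ (h + 1) - 1)) (R : List Bool), R.length + 1 = h →
      rstr (u k) = R ++ [true] →
      0 < (k : ℕ) ∧ ∀ (i : Fin (2 ^ (h + 1) - 1)), (i : ℕ) = (k : ℕ) - 1 → rstr (u i) = R ++ [false] := by
    intro k R hR hk
    obtain ⟨i, hi⟩ := hbij.2 (mkN (R ++ [false]) (by simp; omega))
    have hix : rstr (u i) = R ++ [false] := by rw [hi, rstr_mkN]
    have hk1 := hpair i k R hR hix hk
    refine ⟨by omega, fun i' hi' => ?_⟩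
    have : i' = i := Fin.ext (by omega)
    rw [this, hix]
  have hinternal_between : ∀ (x z : BNode h) (R : List Bool), R.length + 1 = h →
      rstr x = R ++ [true] → BNode.isLeaf z → BNode.colexLt x z →
      ∃ w : BNode h, ¬ BNode.isLeaf w ∧ BNode.colexLt x w ∧ BNode.colexLt w z := by
    intro x z R hR hx hz hxz
    have hzlen : (rstr z).length = h := leaf_iff.mp hz
    have hdl : ((rstr z).dropLast).length = h - 1 := by
      rw [List.length_dropLast, hzlen]
    refine ⟨mkN (rstr z).dropLast (by omega), ?_, ?_, ?_⟩
    · rw [leaf_iff, rstr_mkN, hdl]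
      omega
    · rw [colex_iff, rstr_mkN, hx]
      apply lex_dropLast_of_lex R (rstr z) (by omega)
      rw [colex_iff, hx] at hxz
      exact hxz
    · rw [colex_iff, rstr_mkN]
      apply lex_dropLast_self
      intro hnil
      rw [hnil] at hzlen
      simp at hzlen
      omega
  have hu0 : ∀ k : Fin (2 ^ (h + 1) - 1), (k : ℕ) = 0 → rstr (u k) = [] := by
    intro k hk0
    obtain ⟨m, hm⟩ := hbij.2 (mkN [] (by simp))
    have hmr : rstr (u m) = [] := by rw [hm, rstr_mkN]
    by_cases hmk : m = k
    · rw [← hmk]; exact hmr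
    · exfalso
      have hklt : k < m := by
        rw [Fin.lt_def]
        have : (m : ℕ) ≠ (k : ℕ) := fun hc => hmk (Fin.ext hc)
        omega
      have := hmono k m hklt
      rw [colex_iff, hmr] at this
      exact not_lex_nil this
  have hlast : ∀ k : Fin (2 ^ (h + 1) - 1), (k : ℕ) = (2 ^ (h + 1) - 1) - 1 → BNode.isLeaf (u k) := by
    intro k hk
    by_contra hnl
    rw [not_leaf_iff] at hnl
    have hxlen : (rstr (u k)).length < h := by rw [rstr_length]; exact hnl
    obtain ⟨m, hm⟩ := hbij.2 (mkN (rstr (u k) ++ [true]) (by simp; omega))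
    have hxk : BNode.colexLt (u k) (u m) := by
      rw [colex_iff, hm, rstr_mkN]
      exact lex_self_append _
    have h1 := hlt_of _ _ hxk
    rw [Fin.lt_def] at h1
    have := m.isLt
    omega
  constructor
  · -- part 1
    intro i j hij hjn hleaf hpredi hnext
    have h0i : 0 < i := by
      by_contra h0
      have hl0 := hleaf 0 (by omega) (by omega) (by omega)
      have hl := leaf_iff.mp hl0
      rw [hu0 _ rfl] at hl
      simp at hl
      omega
    have hxleaf := hleaf i (by omega) le_rfl hij
    obtain ⟨R, hR, c, hc⟩ := leaf_decomp hh _ hxleaf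
    cases c with
    | true =>
      exfalso
      obtain ⟨hpos, hp⟩ := hpred ⟨i, by omega⟩ R hR hc
      have hlm1 := hp ⟨i - 1, by omega⟩ (by simp)
      have : BNode.isLeaf (u ⟨i - 1, by omega⟩) := by
        rw [leaf_iff, hlm1]
        simp
        omega
      exact hpredi h0i this
    | false =>
      obtain ⟨hi1, hs⟩ := hsucc ⟨i, by omega⟩ R hR hc
      simp only [Fin.val_mk] at hi1 hs
      have hij2 : i < j := by
        rcases Nat.eq_or_lt_of_le hij with heq | hlt
        · exfalso
          have hb := hs ⟨i + 1, by omega⟩ (by simp)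
          have : BNode.isLeaf (u ⟨i + 1, by omega⟩) := by
            rw [leaf_iff, hb]
            simp
            omega
          subst heq
          exact hnext this
        · exact hlt
      by_contra hne
      have h2j : i + 2 ≤ j := by omega
      have hbleaf := hs ⟨i + 1, by omega⟩ (by simp)
      have hl2 := hleaf (i + 2) (by omega) (by omega) (by omega)
      obtain ⟨w, hw1, hw2, hw3⟩ := hinternal_between (u ⟨i + 1, by omega⟩)
        (u ⟨i + 2, by omega⟩) R hR hbleaf hl2
        (hmono _ _ (by rw [Fin.lt_def]; simp))
      obtain ⟨t, rfl⟩ := hbij.2 w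
      have ht1 := hlt_of _ _ hw2
      have ht2 := hlt_of _ _ hw3
      rw [Fin.lt_def] at ht1 ht2
      simp at ht1 ht2
      omega
  · -- part 2
    have hNa : Nat.card {x : BNode h // ∃ R : List Bool, R.length + 1 = h ∧
        rstr x = R ++ [false]} = 2 ^ (h - 1) := by
      have hb2 : Function.Bijective
          (fun v : List.Vector Bool (h - 1) =>
            (⟨mkN (h := h) (v.toList ++ [false]) (by simp [v.toList_length]; omega),
              v.toList, by simp [v.toList_length]; omega, rstr_mkN _ _⟩ :
              {x : BNode h // ∃ R : List Bool, R.length + 1 = h ∧ rstr x = R ++ [false]})) := by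
        constructor
        · intro v w he
          have h1 : rstr (mkN (h := h) (v.toList ++ [false]) (by simp [v.toList_length]; omega))
              = rstr (mkN (h := h) (w.toList ++ [false]) (by simp [w.toList_length]; omega)) := by
            exact congrArg (fun s => rstr s.1) he
          rw [rstr_mkN, rstr_mkN] at h1
          exact List.Vector.eq _ _ (List.append_inj' h1 (by simp)).1
        · rintro ⟨x, R, hR, hx⟩
          refine ⟨⟨R, by omega⟩, ?_⟩
          apply Subtype.ext
          apply rstr_inj
          rw [rstr_mkN, hx]
          rfl
      rw [← Nat.card_eq_of_bijective _ hb2]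
      simp [Nat.card_eq_fintype_card, card_vector]
    have hstep : ∀ i : Fin (2 ^ (h + 1) - 1), ((u i).1 : ℕ) < h → (i : ℕ) + 1 < (2 ^ (h + 1) - 1) := by
      intro i hint
      by_contra hge
      have hieq : (i : ℕ) = (2 ^ (h + 1) - 1) - 1 := by have := i.isLt; omega
      have hl := hlast i hieq
      unfold BNode.isLeaf at hl
      omega
    have haleaf : ∀ (i : Fin (2 ^ (h + 1) - 1)), ((u i).1 : ℕ) < h →
        (∀ hlt : (i : ℕ) + 1 < (2 ^ (h + 1) - 1), ¬ (((u ⟨(i : ℕ) + 1, hlt⟩).1 : ℕ) < h)) →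
        ∀ hlt : (i : ℕ) + 1 < (2 ^ (h + 1) - 1),
        ∃ R : List Bool, R.length + 1 = h ∧ rstr (u ⟨(i : ℕ) + 1, hlt⟩) = R ++ [false] := by
      intro i hi hnx hlt
      have hzleaf : BNode.isLeaf (u ⟨(i : ℕ) + 1, hlt⟩) := by
        have h1 := hnx hlt
        have h2 := (u ⟨(i : ℕ) + 1, hlt⟩).1.isLt
        unfold BNode.isLeaf
        omega
      obtain ⟨R, hR, c', hc'⟩ := leaf_decomp hh _ hzleaf
      cases c' with
      | false => exact ⟨R, hR, hc'⟩
      | true =>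
        exfalso
        obtain ⟨-, hp⟩ := hpred ⟨(i : ℕ) + 1, hlt⟩ R hR hc'
        have hpi := hp i (by simp)
        have hlen := congrArg List.length hpi
        rw [rstr_length] at hlen
        simp at hlen
        omega
    have hmain : ∀ c : Bool, Nat.card {i : Fin (2 ^ (h + 1) - 1) // c ∈ BNode.out (u i) ∧
        ∀ hlt : (i : ℕ) + 1 < (2 ^ (h + 1) - 1), c ∉ BNode.out (u ⟨(i : ℕ) + 1, hlt⟩)} = 2 ^ (h - 1) := by
      intro c
      rw [← hNa]
      apply Nat.card_eq_of_bijective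
        (fun p => ⟨u ⟨(p.1 : ℕ) + 1, hstep p.1 (mem_out.mp p.2.1)⟩,
          haleaf p.1 (mem_out.mp p.2.1)
            (fun hlt hcon => p.2.2 hlt (mem_out.mpr hcon)) _⟩)
      constructor
      · intro p q he
        have h1 := congrArg Subtype.val he
        simp only at h1
        have h2 := hbij.1 h1
        have h3 := congrArg Fin.val h2
        simp at h3
        exact Subtype.ext (Fin.ext h3)
      · rintro ⟨x, R, hR, hx⟩
        obtain ⟨m, rfl⟩ := hbij.2 x
        have hmpos : 0 < (m : ℕ) := by
          by_contra h0
          have hm0 := hu0 m (by omega)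
          rw [hm0] at hx
          simp at hx
        have hmleaf : BNode.isLeaf (u m) := by
          rw [leaf_iff, hx]
          simp
          omega
        have hpm : ((u ⟨(m : ℕ) - 1, by omega⟩).1 : ℕ) < h := by
          by_contra hnot
          have hleafm1 : BNode.isLeaf (u ⟨(m : ℕ) - 1, by omega⟩) := by
            have := (u ⟨(m : ℕ) - 1, by omega⟩).1.isLt
            unfold BNode.isLeaf
            omega
          obtain ⟨R', hR', c', hc'⟩ := leaf_decomp hh _ hleafm1
          cases c' with
          | false =>
            obtain ⟨hlt1, hs⟩ := hsucc ⟨(m : ℕ) - 1, by omega⟩ R' hR' hc'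
            have hsm := hs m (by simp; omega)
            rw [hx] at hsm
            have := (List.append_inj' hsm (by simp)).2
            simp at this
          | true =>
            have hcx : BNode.colexLt (u ⟨(m : ℕ) - 1, by omega⟩) (u m) := by
              apply hmono
              rw [Fin.lt_def]
              simp
              omega
            obtain ⟨w, hw1, hw2, hw3⟩ := hinternal_between _ _ R' hR' hc' hmleaf hcx
            obtain ⟨t, rfl⟩ := hbij.2 w
            have t1 := hlt_of _ _ hw2
            have t2 := hlt_of _ _ hw3
            rw [Fin.lt_def] at t1 t2
            simp at t1 t2
            omega
        have hmlh : ((u m).1 : ℕ) = h := hmleaf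
        refine ⟨⟨⟨(m : ℕ) - 1, by omega⟩, mem_out.mpr hpm, ?_⟩, ?_⟩
        · intro hlt hcon
          rw [mem_out] at hcon
          have hmeq : (⟨(m : ℕ) - 1 + 1, hlt⟩ : Fin (2 ^ (h + 1) - 1)) = m := Fin.ext (by simp; omega)
          rw [hmeq] at hcon
          omega
        · apply Subtype.ext
          show u ⟨(m : ℕ) - 1 + 1, _⟩ = u m
          exact congrArg u (Fin.ext (by simp; omega))
    rw [Fintype.sum_bool, hmain true, hmain false]
    have h1 : 2 ^ (h + 1) - 1 + 1 = 2 ^ (h + 1) :=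
      Nat.sub_add_cancel (Nat.one_le_two_pow)
    rw [h1, pow_succ, Nat.mul_div_cancel _ (by norm_num)]
    have hh1 : h - 1 + 1 = h := by omega
    calc 2 ^ (h - 1) + 2 ^ (h - 1) = 2 ^ (h - 1) * 2 := by ring
    _ = 2 ^ (h - 1 + 1) := (pow_succ 2 (h - 1)).symm
    _ = 2 ^ h := by rw [hh1]
end

section
/- There is a bijection between ordered rooted trees with n nodes and Łukasiewicz paths of length n: mapping a tree to the sequence L[i] = Σ_{j=1}^{i} (deg(u_j) - 1), where u_1, ..., u_n are the nodes in pre-order and deg(u) is the number of children of u, is a bijection onto the set of integer sequences L of length n with L[n] = -1, L[i] ≥ 0 for 1 ≤ i ≤ n-1, and L[i+1] - L[i] ≥ -1 for 1 ≤ i ≤ n-1. -/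
/-- An ordered rooted tree: a node together with a (linearly ordered) list of
child subtrees. -/
inductive OTree : Type where
  | node : List OTree → OTree

/-- Number of nodes. -/
def OTree.size : OTree → ℕ
  | .node cs => 1 + (cs.attach.map (fun t => t.1.size)).sum
decreasing_by
  have h := List.sizeOf_lt_of_mem t.2
  simp only [OTree.node.sizeOf_spec]
  omega

/-- The sequence of out-degrees (numbers of children) of the nodes in pre-order:
root first, then recursively the subtrees of the children in order. -/
def OTree.degSeq : OTree → List ℕ
  | .node cs => cs.length :: (cs.attach.map (fun t => t.1.degSeq)).flatten
decreasing_by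
  have h := List.sizeOf_lt_of_mem t.2
  simp only [OTree.node.sizeOf_spec]
  omega

/-- The list of prefix sums `L[i] = l_1 + ⋯ + l_{i+1}` of a list of integers. -/
def psums (l : List ℤ) : List ℤ :=
  (List.range l.length).map (fun i => (l.take (i + 1)).sum)

/-- The Łukasiewicz sequence of an ordered tree:
`L[i] = ∑_{j ≤ i} (deg(u_j) - 1)` over the pre-order nodes `u_j`. -/
def OTree.luka (t : OTree) : List ℤ :=
  psums (t.degSeq.map (fun k => (k : ℤ) - 1))

/-- `l` is a Łukasiewicz path of length `n`: `L[n] = -1` (1-based), `L[i] ≥ 0`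
for `1 ≤ i ≤ n-1`, and consecutive differences are `≥ -1` (0-based below). -/
def IsLuka (n : ℕ) (l : List ℤ) : Prop :=
  l.length = n ∧ l.getD (n - 1) 0 = -1 ∧
    ∀ i : ℕ, i + 1 < n →
      0 ≤ l.getD i 0 ∧ l.getD (i + 1) 0 - l.getD i 0 ≥ -1

theorem OTree.ind' (P : OTree → Prop)
    (h : ∀ cs : List OTree, (∀ c ∈ cs, P c) → P (.node cs)) : ∀ t, P t := by
  have key : ∀ n (t : OTree), sizeOf t ≤ n → P t := by
    intro n
    induction n with
    | zero =>
      intro t ht; cases t with | node cs => simp [OTree.node.sizeOf_spec] at ht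
    | succ n ih =>
      intro t ht
      cases t with
      | node cs =>
        apply h
        intro c hc
        apply ih
        have := List.sizeOf_lt_of_mem hc
        simp only [OTree.node.sizeOf_spec] at ht
        omega
  intro t; exact key (sizeOf t) t le_rfl

theorem OTree.size_node (cs : List OTree) :
    (OTree.node cs).size = 1 + (cs.map OTree.size).sum := by
  rw [OTree.size]
  congr 1
  rw [List.attach_map_val]  -- guess

theorem OTree.degSeq_node (cs : List OTree) :
    (OTree.node cs).degSeq = cs.length :: (cs.map OTree.degSeq).flatten := by
  rw [OTree.degSeq]
  congr 2
  rw [List.attach_map_val]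
def sumZ (d : List ℕ) : ℤ := (d.map (fun k => (k : ℤ) - 1)).sum

@[simp] theorem sumZ_nil : sumZ [] = 0 := rfl
@[simp] theorem sumZ_cons (k : ℕ) (d : List ℕ) : sumZ (k :: d) = (k : ℤ) - 1 + sumZ d := by
  simp [sumZ]
@[simp] theorem sumZ_append (a b : List ℕ) : sumZ (a ++ b) = sumZ a + sumZ b := by
  simp [sumZ]

def Bal (d : List ℕ) : Prop :=
  sumZ d = -1 ∧ ∀ p, p <+: d → p ≠ d → 0 ≤ sumZ p

theorem Bal.ne_nil {d : List ℕ} (h : Bal d) : d ≠ [] := by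
  intro he; rw [he] at h; simpa using h.1

theorem sumZ_flatten_of_bal {bs : List (List ℕ)} (h : ∀ b ∈ bs, Bal b) :
    sumZ bs.flatten = -(bs.length : ℤ) := by
  induction bs with
  | nil => simp [sumZ]
  | cons b bs ih =>
    simp only [List.flatten_cons, sumZ_append, List.length_cons]
    rw [(h b (by simp)).1, ih (fun x hx => h x (by simp [hx]))]
    push_cast; ring

theorem prefix_flatten {α : Type*} : ∀ (bs : List (List α)) (p : List α),
    p <+: bs.flatten → p = bs.flatten ∨
      ∃ bs1 b bs2 q, bs = bs1 ++ b :: bs2 ∧ p = bs1.flatten ++ q ∧ q <+: b ∧ q ≠ b := by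
  intro bs
  induction bs with
  | nil => intro p hp; left; simpa using hp
  | cons b bs ih =>
    intro p hp
    simp only [List.flatten_cons] at hp
    by_cases hbp : b <+: p
    case pos =>
      obtain ⟨q, rfl⟩ := hbp
      have hq : q <+: bs.flatten := (List.prefix_append_right_inj b).1 hp
      rcases ih q hq with h2 | ⟨bs1, b', bs2, q', rfl, rfl, hq1, hq2⟩
      · left; simp [h2]
      · right; exact ⟨b :: bs1, b', bs2, q', by simp, by simp, hq1, hq2⟩
    case neg =>
      have h1 : p <+: b :=
        (List.prefix_or_prefix_of_prefix hp (List.prefix_append b bs.flatten)).resolve_right hbp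
      have he : p ≠ b := fun h => hbp (h ▸ List.prefix_refl _)
      right; exact ⟨[], b, bs, p, by simp, by simp, h1, he⟩

theorem OTree.degSeq_length : ∀ t : OTree, t.degSeq.length = t.size := by
  apply OTree.ind'
  intro cs ih
  rw [OTree.degSeq_node, OTree.size_node]
  simp only [List.length_cons, List.length_flatten, List.map_map]
  rw [Nat.add_comm, List.map_congr_left (fun c hc => by simp [ih c hc] : ∀ c ∈ cs, (List.length ∘ OTree.degSeq) c = OTree.size c)]

theorem Bal_degSeq : ∀ t : OTree, Bal t.degSeq := by
  apply OTree.ind'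
  intro cs ih
  rw [OTree.degSeq_node]
  have hball : ∀ b ∈ cs.map OTree.degSeq, Bal b := by
    intro b hb
    obtain ⟨c, hc, rfl⟩ := List.mem_map.1 hb
    exact ih c hc
  constructor
  · rw [sumZ_cons, sumZ_flatten_of_bal hball]
    simp; ring
  · intro p hp hne
    rcases hp with ⟨s, hs⟩
    cases p with
    | nil => simp
    | cons x p =>
      simp only [List.cons_append, List.cons.injEq] at hs
      obtain ⟨rfl, hs⟩ := hs
      have hp' : p <+: (cs.map OTree.degSeq).flatten := ⟨s, hs⟩
      rcases prefix_flatten _ _ hp' with h2 | ⟨bs1, b, bs2, q, hsplit, rfl, hq1, hq2⟩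
      · exact absurd (by rw [h2]) hne
      · have hb : Bal b := hball b (by rw [hsplit]; simp)
        have hq0 : 0 ≤ sumZ q := hb.2 q hq1 hq2
        have hbs1 : ∀ b' ∈ bs1, Bal b' := fun b' hb' => hball b' (by rw [hsplit]; simp [hb'])
        have hlen : bs1.length + 1 ≤ cs.length := by
          have := congrArg List.length hsplit
          simp at this
          omega
        rw [sumZ_cons, sumZ_append, sumZ_flatten_of_bal hbs1]
        have : (bs1.length : ℤ) + 1 ≤ (cs.length : ℤ) := by exact_mod_cast hlen
        omega

theorem coeMap_eq (d : List ℕ) :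
    (d.map (fun k => (k : ℤ) - 1)) = d.map (fun k : ℕ => (k : ℤ) - 1) := by
  have h : (do let a ← d; pure (a : ℤ) : List ℤ) = d.map (fun a : ℕ => (a : ℤ)) := by
    induction d with
    | nil => rfl
    | cons x d ih => simpa using ih
  show (List.map (fun k => k - 1) (do let a ← d; pure (a : ℤ) : List ℤ)) = _
  rw [h, List.map_map]
  rfl

theorem sumZ_eq (d : List ℕ) : sumZ d = (d.map (fun k : ℕ => (k : ℤ) - 1)).sum := by
  unfold sumZ
  rw [coeMap_eq]

theorem sumZ_take (d : List ℕ) (i : ℕ) :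
    sumZ (d.take i) = ((d.map (fun k : ℕ => (k : ℤ) - 1)).take i).sum := by
  rw [sumZ_eq, List.map_take]

theorem sumZ_take_succ (d : List ℕ) (j : ℕ) (hj : j < d.length) :
    sumZ (d.take (j + 1)) = sumZ (d.take j) + ((d[j] : ℤ) - 1) := by
  rw [sumZ_take, sumZ_take, List.sum_take_succ _ j (by simpa using hj), List.getElem_map]

theorem decomp_exists : ∀ (k : ℕ) (d : List ℕ),
    sumZ d = -(k : ℤ) → (∀ p, p <+: d → p ≠ d → 1 - (k : ℤ) ≤ sumZ p) →
    ∃ bs : List (List ℕ), bs.length = k ∧ bs.flatten = d ∧ ∀ b ∈ bs, Bal b := by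
  intro k
  induction k with
  | zero =>
    intro d hsum hpre
    have hd : d = [] := by
      by_contra h
      have := hpre [] List.nil_prefix (Ne.symm h)
      simp at this
    subst hd
    exact ⟨[], rfl, rfl, by simp⟩
  | succ k ih =>
    intro d hsum hpre
    have hex : ∃ i, sumZ (d.take i) ≤ -1 := by
      refine ⟨d.length, by rw [List.take_length, hsum]; push_cast; omega⟩
    classical
    set i := Nat.find hex with hi
    have hspec : sumZ (d.take i) ≤ -1 := Nat.find_spec hex
    have hmin : ∀ j < i, 0 ≤ sumZ (d.take j) := by
      intro j hj
      have := Nat.find_min hex hj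
      omega
    have hipos : i ≠ 0 := by
      intro h0
      rw [h0] at hspec
      simp at hspec
    have hile : i ≤ d.length := by
      by_contra h
      have := Nat.find_min hex (show d.length < i by omega)
      rw [List.take_length, hsum] at this
      push_cast at this
      omega
    clear_value i
    obtain ⟨j, rfl⟩ : ∃ j, i = j + 1 := ⟨i - 1, by omega⟩
    have hstep := sumZ_take_succ d j (by omega)
    have hj0 : 0 ≤ sumZ (d.take j) := hmin j (by omega)
    have hdj : (0 : ℤ) ≤ (d[j]'(by omega) : ℤ) := by positivity
    have heq : sumZ (d.take (j + 1)) = -1 := by omega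
    have hbal : Bal (d.take (j + 1)) := by
      refine ⟨heq, ?_⟩
      intro p hp hne
      have h2 : (d.take (j + 1)).length = j + 1 := by
        rw [List.length_take]; omega
      have hplen : p.length < j + 1 := by
        by_contra hcon
        apply hne
        have hle := hp.length_le
        rw [h2] at hle
        have hl : p.length = j + 1 := by omega
        have hp' := List.prefix_iff_eq_take.1 hp
        rw [hp', hl, List.take_take, min_self]
      have hpd : p = d.take p.length := by
        have : p <+: d := hp.trans (List.take_prefix _ _)
        exact List.prefix_iff_eq_take.1 this
      rw [hpd]
      exact hmin _ hplen
    have hrest : sumZ (List.drop (j + 1) d) = -(k : ℤ) := by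
      have : sumZ (d.take (j + 1)) + sumZ (d.drop (j + 1)) = sumZ d := by
        rw [← sumZ_append, List.take_append_drop]
      rw [heq] at this
      push_cast at hsum ⊢
      omega
    have hrestpre : ∀ p, p <+: d.drop (j + 1) → p ≠ d.drop (j + 1) → 1 - (k : ℤ) ≤ sumZ p := by
      intro p hp hne
      have h1 : d.take (j + 1) ++ p <+: d := by
        conv_rhs => rw [← List.take_append_drop (j + 1) d]
        exact (List.prefix_append_right_inj _).2 hp
      have h2 : d.take (j + 1) ++ p ≠ d := by
        intro h
        apply hne
        have := congrArg (List.drop (j + 1)) h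
        rw [List.drop_append_of_le_length (by rw [List.length_take]; omega)] at this
        simpa [List.drop_take] using this
      have := hpre _ h1 h2
      rw [sumZ_append, heq] at this
      push_cast at this ⊢
      omega
    obtain ⟨bs, hlen, hflat, hball⟩ := ih (d.drop (j + 1)) hrest hrestpre
    refine ⟨d.take (j + 1) :: bs, by simp [hlen], by simp [hflat], ?_⟩
    intro b hb
    rcases List.mem_cons.1 hb with rfl | hb
    · exact hbal
    · exact hball b hb

theorem decomp_unique : ∀ (bs cs : List (List ℕ)), (∀ b ∈ bs, Bal b) → (∀ c ∈ cs, Bal c) →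
    bs.flatten = cs.flatten → bs = cs := by
  intro bs
  induction bs with
  | nil =>
    intro cs _ hc h
    cases cs with
    | nil => rfl
    | cons c cs' =>
      exfalso
      apply (hc c (by simp)).ne_nil
      have hl := congrArg List.length h
      simp only [List.flatten_nil, List.length_nil, List.flatten_cons, List.length_append] at hl
      exact List.eq_nil_of_length_eq_zero (by omega)
  | cons b bs ih =>
    intro cs hb hc h
    cases cs with
    | nil =>
      exfalso
      apply (hb b (by simp)).ne_nil
      have hl := congrArg List.length h
      simp only [List.flatten_nil, List.length_nil, List.flatten_cons, List.length_append] at hl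
      exact List.eq_nil_of_length_eq_zero (by omega)
    | cons c cs' =>
      simp only [List.flatten_cons] at h
      have hbc : b = c := by
        have h1 : b <+: c ++ cs'.flatten := h ▸ List.prefix_append b bs.flatten
        have h2 : c <+: c ++ cs'.flatten := List.prefix_append c cs'.flatten
        rcases List.prefix_or_prefix_of_prefix h1 h2 with hp | hp
        · by_contra hne
          have := (hc c (by simp)).2 b hp hne
          rw [(hb b (by simp)).1] at this
          omega
        · by_contra hne
          have := (hb b (by simp)).2 c hp (fun hx => hne hx.symm)
          rw [(hc c (by simp)).1] at this
          omega
      subst hbc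
      have h' : bs.flatten = cs'.flatten := by
        exact (List.append_cancel_left h)
      rw [ih cs' (fun x hx => hb x (by simp [hx])) (fun x hx => hc x (by simp [hx])) h']

theorem exists_map_eq {α β : Type*} (f : α → β) :
    ∀ bs : List β, (∀ b ∈ bs, ∃ a, f a = b) → ∃ ts : List α, ts.map f = bs := by
  intro bs
  induction bs with
  | nil => intro _; exact ⟨[], rfl⟩
  | cons b bs ih =>
    intro h
    obtain ⟨a, ha⟩ := h b (by simp)
    obtain ⟨ts, hts⟩ := ih (fun x hx => h x (by simp [hx]))
    exact ⟨a :: ts, by simp [ha, hts]⟩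

theorem bal_tail (k : ℕ) (rest : List ℕ) (h : Bal (k :: rest)) :
    sumZ rest = -(k : ℤ) ∧ ∀ p, p <+: rest → p ≠ rest → 1 - (k : ℤ) ≤ sumZ p := by
  constructor
  · have := h.1
    rw [sumZ_cons] at this
    omega
  · intro p hp hne
    have h1 : (k :: p) <+: (k :: rest) := by
      rw [List.cons_prefix_cons]
      exact ⟨rfl, hp⟩
    have h2 : (k :: p) ≠ (k :: rest) := by
      intro hx
      exact hne (by injection hx)
    have := h.2 _ h1 h2
    rw [sumZ_cons] at this
    omega

theorem exists_tree_of_bal : ∀ (N : ℕ) (d : List ℕ), d.length ≤ N → Bal d →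
    ∃ t : OTree, t.degSeq = d := by
  intro N
  induction N with
  | zero =>
    intro d hlen hbal
    exact absurd (List.eq_nil_of_length_eq_zero (by omega)) hbal.ne_nil
  | succ N ih =>
    intro d hlen hbal
    cases d with
    | nil => exact absurd rfl hbal.ne_nil
    | cons k rest =>
      obtain ⟨hsum, hpre⟩ := bal_tail k rest hbal
      obtain ⟨bs, hbslen, hflat, hball⟩ := decomp_exists k rest hsum hpre
      obtain ⟨ts, hts⟩ := exists_map_eq OTree.degSeq bs (by
        intro b hb
        apply ih
        · have h1 : b.length ≤ bs.flatten.length := by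
            exact (List.sublist_flatten_of_mem hb).length_le
          rw [hflat] at h1
          simp only [List.length_cons] at hlen
          omega
        · exact hball b hb)
      refine ⟨OTree.node ts, ?_⟩
      rw [OTree.degSeq_node, hts, hflat]
      congr 1
      have := congrArg List.length hts
      simp only [List.length_map] at this
      omega

theorem degSeq_injective : ∀ t t' : OTree, t.degSeq = t'.degSeq → t = t' := by
  have key : ∀ t : OTree, ∀ t' : OTree, t.degSeq = t'.degSeq → t = t' := by
    apply OTree.ind' (P := fun t => ∀ t' : OTree, t.degSeq = t'.degSeq → t = t')
    intro cs ih t' h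
    cases t' with
    | node cs' =>
      rw [OTree.degSeq_node, OTree.degSeq_node] at h
      have h2 : (cs.map OTree.degSeq).flatten = (cs'.map OTree.degSeq).flatten := by
        injection h
      have hmapeq : cs.map OTree.degSeq = cs'.map OTree.degSeq := by
        apply decomp_unique
        · intro b hb
          obtain ⟨c, _, rfl⟩ := List.mem_map.1 hb
          exact Bal_degSeq c
        · intro b hb
          obtain ⟨c, _, rfl⟩ := List.mem_map.1 hb
          exact Bal_degSeq c
        · exact h2
      congr 1
      clear h h2
      induction cs generalizing cs' with
      | nil =>
        cases cs' with
        | nil => rfl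
        | cons => simp at hmapeq
      | cons c cs ihl =>
        cases cs' with
        | nil => simp at hmapeq
        | cons c' cs'' =>
          simp only [List.map_cons, List.cons.injEq] at hmapeq
          have hc : c = c' := ih c (by simp) c' hmapeq.1
          rw [hc, ihl (fun x hx t' ht' => ih x (by simp [hx]) t' ht') cs'' hmapeq.2]
  exact key

theorem psums_length (l : List ℤ) : (psums l).length = l.length := by simp [psums]

theorem psums_getD (l : List ℤ) (i : ℕ) (h : i < l.length) :
    (psums l).getD i 0 = (l.take (i + 1)).sum := by
  rw [List.getD_eq_getElem _ _ (by rw [psums_length]; exact h)]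
  simp [psums]

theorem psums_injective {a b : List ℤ} (h : psums a = psums b) : a = b := by
  have hlen : a.length = b.length := by
    have := congrArg List.length h
    simpa [psums_length] using this
  have key : ∀ j, j < a.length → (a.take (j + 1)).sum = (b.take (j + 1)).sum := by
    intro j hj
    rw [← psums_getD a j hj, ← psums_getD b j (hlen ▸ hj), h]
  apply List.ext_getElem hlen
  intro i h1 h2
  have e1 := List.sum_take_succ a i h1
  have e2 := List.sum_take_succ b i h2
  cases i with
  | zero =>
    simp only [List.take_zero, List.sum_nil, zero_add] at e1 e2
    rw [← e1, ← e2, key 0 h1]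
  | succ j =>
    have k1 := key j (by omega)
    have k2 := key (j + 1) h1
    omega

theorem luka_eq (t : OTree) : t.luka = psums (t.degSeq.map (fun k : ℕ => (k : ℤ) - 1)) := by
  rw [OTree.luka, coeMap_eq]

theorem luka_isLuka (t : OTree) (n : ℕ) (hn : 1 ≤ n) (hsize : t.size = n) : IsLuka n t.luka := by
  have hbal := Bal_degSeq t
  have hdlen : t.degSeq.length = n := by rw [OTree.degSeq_length, hsize]
  have hmlen : (t.degSeq.map (fun k : ℕ => (k : ℤ) - 1)).length = n := by
    rw [List.length_map, hdlen]
  have hproper : ∀ j, j + 1 < n → 0 ≤ ((t.degSeq.map (fun k : ℕ => (k : ℤ) - 1)).take (j + 1)).sum := by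
    intro j hj
    rw [← sumZ_take]
    apply hbal.2
    · exact List.take_prefix _ _
    · intro hx
      have := congrArg List.length hx
      rw [List.length_take, hdlen] at this
      omega
  refine ⟨by rw [luka_eq, psums_length, hmlen], ?_, ?_⟩
  · rw [luka_eq, psums_getD _ _ (by omega)]
    have h1 : n - 1 + 1 = n := by omega
    rw [h1, ← hmlen, List.take_length, ← sumZ_eq]
    exact hbal.1
  · intro i hi
    constructor
    · rw [luka_eq, psums_getD _ _ (by omega)]
      exact hproper i (by omega)
    · rw [luka_eq, psums_getD _ _ (by omega), psums_getD _ _ (by omega)]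
      rw [List.sum_take_succ _ (i + 1) (by omega), List.getElem_map]
      have : (0 : ℤ) ≤ (t.degSeq[i + 1]'(by omega) : ℤ) := by positivity
      omega

theorem diffs_length (l : List ℤ) : (List.zipWith (· - ·) l (0 :: l)).length = l.length := by
  rw [List.length_zipWith, List.length_cons]
  omega

theorem diffs_getD0 (l : List ℤ) (h : 0 < l.length) :
    (List.zipWith (· - ·) l (0 :: l)).getD 0 0 = l.getD 0 0 := by
  rw [List.getD_eq_getElem _ _ (by rw [diffs_length]; omega), List.getD_eq_getElem _ _ h,
    List.getElem_zipWith]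
  simp

theorem diffs_getD_succ (l : List ℤ) (j : ℕ) (h : j + 1 < l.length) :
    (List.zipWith (· - ·) l (0 :: l)).getD (j + 1) 0 = l.getD (j + 1) 0 - l.getD j 0 := by
  rw [List.getD_eq_getElem _ _ (by rw [diffs_length]; omega), List.getD_eq_getElem _ _ h,
    List.getD_eq_getElem _ _ (by omega), List.getElem_zipWith]
  simp

theorem diffs_take_sum (l : List ℤ) : ∀ j, j < l.length →
    ((List.zipWith (· - ·) l (0 :: l)).take (j + 1)).sum = l.getD j 0 := by
  intro j
  induction j with
  | zero =>
    intro h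
    rw [List.sum_take_succ _ 0 (by rw [diffs_length]; omega),
      ← List.getD_eq_getElem _ 0 (by rw [diffs_length]; omega), diffs_getD0 l h]
    simp
  | succ j ih =>
    intro h
    rw [List.sum_take_succ _ (j + 1) (by rw [diffs_length]; omega),
      ← List.getD_eq_getElem _ 0 (by rw [diffs_length]; omega), diffs_getD_succ l j h,
      ih (by omega)]
    ring

theorem psums_diffs (l : List ℤ) : psums (List.zipWith (· - ·) l (0 :: l)) = l := by
  apply List.ext_getElem (by rw [psums_length, diffs_length])
  intro i h1 h2
  rw [← List.getD_eq_getElem (psums _) 0 h1, psums_getD _ _ (by rw [diffs_length]; omega),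
    diffs_take_sum l i h2, List.getD_eq_getElem _ _ h2]

theorem diffs_ge (n : ℕ) (hn : 1 ≤ n) (l : List ℤ) (hl : IsLuka n l) :
    ∀ i, i < n → -1 ≤ (List.zipWith (· - ·) l (0 :: l)).getD i 0 := by
  obtain ⟨hlen, hlast, hcond⟩ := hl
  intro i hi
  cases i with
  | zero =>
    rw [diffs_getD0 l (by omega)]
    by_cases h1 : n = 1
    · subst h1
      simp only [Nat.sub_self] at hlast
      omega
    · have := (hcond 0 (by omega)).1
      omega
  | succ j =>
    have := (hcond j (by omega)).2
    rw [diffs_getD_succ l j (by omega)]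
    omega

theorem map_toNat_diffs (n : ℕ) (hn : 1 ≤ n) (l : List ℤ) (hl : IsLuka n l) :
    (((List.zipWith (· - ·) l (0 :: l)).map (fun x => (x + 1).toNat)).map
      (fun k : ℕ => (k : ℤ) - 1)) = List.zipWith (· - ·) l (0 :: l) := by
  apply List.ext_getElem (by simp)
  intro i h1 h2
  have hi : i < n := by
    rw [diffs_length, hl.1] at h2
    exact h2
  have hge := diffs_ge n hn l hl i hi
  rw [List.getD_eq_getElem _ _ h2] at hge
  simp only [List.getElem_map]
  rw [Int.toNat_of_nonneg (by omega)]
  omega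

theorem main_exists (n : ℕ) (hn : 1 ≤ n) (l : List ℤ) (hl : IsLuka n l) :
    ∃ t : OTree, t.size = n ∧ t.luka = l := by
  have hlen := hl.1
  have hdlen : ((List.zipWith (· - ·) l (0 :: l)).map (fun x => (x + 1).toNat)).length = n := by
    rw [List.length_map, diffs_length, hlen]
  have hmap := map_toNat_diffs n hn l hl
  have hbal : Bal ((List.zipWith (· - ·) l (0 :: l)).map (fun x => (x + 1).toNat)) := by
    constructor
    · rw [sumZ_eq, hmap]
      have h2 : List.zipWith (· - ·) l (0 :: l)
          = (List.zipWith (· - ·) l (0 :: l)).take ((n - 1) + 1) := by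
        rw [(by omega : n - 1 + 1 = n), ← hlen, ← diffs_length l, List.take_length]
      rw [h2, diffs_take_sum l (n - 1) (by omega)]
      exact hl.2.1
    · intro p hp hne
      have hple : p.length < n := by
        have h1 := hp.length_le
        rw [hdlen] at h1
        rcases lt_or_eq_of_le h1 with h | h
        · exact h
        · exfalso
          apply hne
          have h3 := List.prefix_iff_eq_take.1 hp
          rw [h3, h, ← hdlen, List.take_length]
      have hpt := List.prefix_iff_eq_take.1 hp
      rw [hpt, sumZ_take, hmap]
      cases hp2 : p.length with
      | zero => simp
      | succ j =>
        rw [hp2] at hple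
        rw [diffs_take_sum l j (by omega)]
        have := (hl.2.2 j (by omega)).1
        exact this
  obtain ⟨t, ht⟩ := exists_tree_of_bal n _ (by omega) hbal
  refine ⟨t, ?_, ?_⟩
  · rw [← OTree.degSeq_length, ht, hdlen]
  · rw [luka_eq, ht, hmap, psums_diffs]

/-- The map sending an ordered rooted tree with `n` nodes to
the prefix-sum sequence `L[i] = ∑_{j=1}^{i} (deg(u_j) - 1)` of its pre-order
out-degrees is a bijection onto the set of Łukasiewicz paths of length `n`. -/
theorem orderedTrees_equiv_lukasiewicz (n : ℕ) (hn : 1 ≤ n) :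
    (∀ t : OTree, t.size = n → IsLuka n t.luka) ∧
    (∀ l : List ℤ, IsLuka n l → ∃! t : OTree, t.size = n ∧ t.luka = l) := by
  constructor
  · intro t ht
    exact luka_isLuka t n hn ht
  · intro l hl
    obtain ⟨t, hts, htl⟩ := main_exists n hn l hl
    refine ⟨t, ⟨hts, htl⟩, ?_⟩
    intro t' ⟨hts', htl'⟩
    apply degSeq_injective
    have h1 : t'.luka = t.luka := by rw [htl, htl']
    rw [luka_eq, luka_eq] at h1
    have h2 := psums_injective h1
    exact List.map_injective_iff.2 (fun a b hab => by omega) h2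
end
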